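/- arXiv:0804.0704 — 3 statements merged into one kernel-verified Lean document; each statement's English description precedes it below -/
import Mathlib

section
/- Let (W,S) be a Coxeter system indexed by I and let w ∈ W. Then the set I^-(w) = {i ∈ I : ℓ(w s_i) = ℓ(w) - 1} is a spherical subset of I, i.e. the standard parabolic subgroup generated by {s_i : i ∈ I^-(w)} is finite. -/
open List

namespace DescentSpherical

open CoxeterSystem

attribute [local instance] Classical.propDecidable

variable {B W : Type*} [Group W] {M : CoxeterMatrix B} (cs : CoxeterSystem M W)

local prefix:100 "σ" => cs.simple
local prefix:100 "ℓ" => cs.length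
local prefix:100 "π" => cs.wordProd
local prefix:100 "ris" => cs.rightInvSeq

/-- Indicator sum: the number of occurrences of `t` in `l`, as an element of `ZMod 2`. -/
noncomputable def indic (t : W) (l : List W) : ZMod 2 :=
  (l.map (fun x => if x = t then (1 : ZMod 2) else 0)).sum

@[simp] theorem indic_nil (t : W) : indic t ([] : List W) = 0 := rfl

theorem indic_cons (t x : W) (l : List W) :
    indic t (x :: l) = (if x = t then (1 : ZMod 2) else 0) + indic t l := by
  simp [indic]

theorem indic_append (t : W) (l₁ l₂ : List W) :
    indic t (l₁ ++ l₂) = indic t l₁ + indic t l₂ := by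
  simp [indic]

theorem indic_reverse (t : W) (l : List W) : indic t l.reverse = indic t l := by
  simp [indic, List.sum_reverse]

theorem mem_of_indic_ne_zero {t : W} {l : List W} (h : indic t l ≠ 0) : t ∈ l := by
  induction l with
  | nil => simp at h
  | cons x l ih =>
    rw [indic_cons] at h
    by_cases hx : x = t
    · subst hx; exact mem_cons_self
    · rw [if_neg hx, zero_add] at h
      exact mem_cons_of_mem x (ih h)

/-- The function on `W × ZMod 2` associated to the generator `i`. -/
noncomputable def sigmaFun (i : B) : W × ZMod 2 → W × ZMod 2 :=
  fun p => (σ i * p.1 * σ i, p.2 + if p.1 = σ i then 1 else 0)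

theorem conj_simple_eq_simple_iff (i : B) (x : W) :
    σ i * x * σ i = σ i ↔ x = σ i := by
  constructor
  · intro h
    have h2 : σ i * (σ i * x * σ i) * σ i = σ i * σ i * σ i := by rw [h]
    rw [cs.simple_mul_simple_self] at h2
    calc x = (σ i * σ i) * x * (σ i * σ i) := by rw [cs.simple_mul_simple_self]; group
    _ = σ i * (σ i * x * σ i) * σ i := by group
    _ = σ i := by rw [h2, one_mul]
  · intro h
    rw [h, cs.simple_mul_simple_self, one_mul]

theorem sigmaFun_involutive (i : B) : Function.Involutive (sigmaFun cs i) := by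
  intro p
  unfold sigmaFun
  dsimp only
  have h1 : σ i * (σ i * p.1 * σ i) * σ i = p.1 := by
    calc σ i * (σ i * p.1 * σ i) * σ i = (σ i * σ i) * p.1 * (σ i * σ i) := by group
    _ = p.1 := by rw [cs.simple_mul_simple_self]; group
  have h2 : (if σ i * p.1 * σ i = σ i then (1 : ZMod 2) else 0)
      = (if p.1 = σ i then (1 : ZMod 2) else 0) :=
    if_congr (conj_simple_eq_simple_iff cs i p.1) rfl rfl
  rw [h1, h2]
  have h3 : ∀ a c : ZMod 2, a + c + c = a := by decide
  rw [add_assoc, Prod.mk.injEq]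
  refine ⟨rfl, ?_⟩
  rw [← add_assoc, h3]

/-- The permutation of `W × ZMod 2` associated to the generator `i`. -/
noncomputable def sigmaPerm (i : B) : Equiv.Perm (W × ZMod 2) :=
  Function.Involutive.toPerm _ (sigmaFun_involutive cs i)

theorem sigmaPerm_apply (i : B) (p : W × ZMod 2) :
    sigmaPerm cs i p = (σ i * p.1 * σ i, p.2 + if p.1 = σ i then 1 else 0) := rfl

theorem ris_cons (i : B) (ω : List B) :
    ris (i :: ω) = ((π ω)⁻¹ * σ i * π ω) :: ris ω := rfl

theorem prod_sigmaPerm_apply (ω : List B) (p : W × ZMod 2) :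
    (ω.map (sigmaPerm cs)).prod p = (π ω * p.1 * (π ω)⁻¹, p.2 + indic p.1 (ris ω)) := by
  induction ω with
  | nil => simp [cs.wordProd_nil]
  | cons i ω ih =>
    rw [map_cons, prod_cons, Equiv.Perm.mul_apply, ih, sigmaPerm_apply]
    dsimp only
    rw [ris_cons, indic_cons, cs.wordProd_cons, Prod.mk.injEq]
    constructor
    · rw [mul_inv_rev, cs.inv_simple]; group
    · have hcond : (π ω * p.1 * (π ω)⁻¹ = σ i) ↔ ((π ω)⁻¹ * σ i * π ω = p.1) := by
        constructor
        · intro h; rw [← h]; group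
        · intro h; rw [← h]; group
      rw [if_congr hcond rfl rfl]
      ring

/-! ### The alternating word computation -/

theorem alt_succ_eq_cons (i i' : B) (k : ℕ) :
    alternatingWord i i' (k + 1) = (if Even k then i' else i) :: alternatingWord i i' k :=
  alternatingWord_succ' i i' k

theorem wordProd_alt_succ (i i' : B) (k : ℕ) :
    π (alternatingWord i i' (k + 1)) = σ (if Even k then i' else i) * π (alternatingWord i i' k) := by
  rw [alt_succ_eq_cons, cs.wordProd_cons]

/-- The `k`-th "gap" element of the alternating word. -/
noncomputable def altGap (i i' : B) (k : ℕ) : W :=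
  (π (alternatingWord i i' k))⁻¹ * π (alternatingWord i i' (k + 1))

theorem ris_alternatingWord (i i' : B) (n : ℕ) :
    ris (alternatingWord i i' n) = ((range n).reverse).map (altGap cs i i') := by
  induction n with
  | zero => simp [alternatingWord]
  | succ n ih =>
    rw [alt_succ_eq_cons, ris_cons, ih, range_succ, reverse_append]
    simp only [reverse_cons, reverse_nil, nil_append, singleton_append, map_cons]
    congr 1
    rw [altGap, wordProd_alt_succ]
    group

theorem simple_mul_pow_aux (i i' : B) (a : ℕ) :
    (σ i' * σ i) ^ a * σ i' = σ i' * (σ i * σ i') ^ a := by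
  induction a with
  | zero => simp
  | succ a ih =>
    calc (σ i' * σ i) ^ (a + 1) * σ i'
        = (σ i' * σ i) * ((σ i' * σ i) ^ a * σ i') := by rw [pow_succ', mul_assoc]
      _ = (σ i' * σ i) * (σ i' * (σ i * σ i') ^ a) := by rw [ih]
      _ = σ i' * ((σ i * σ i') * (σ i * σ i') ^ a) := by simp [mul_assoc]
      _ = σ i' * (σ i * σ i') ^ (a + 1) := by rw [← pow_succ']

theorem inv_q_pow (i i' : B) (a : ℕ) :
    ((σ i * σ i') ^ a)⁻¹ = (σ i' * σ i) ^ a := by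
  rw [← inv_pow, mul_inv_rev, cs.inv_simple, cs.inv_simple]

theorem altGap_eq (i i' : B) (k : ℕ) :
    altGap cs i i' k = σ i' * (σ i * σ i') ^ k := by
  rcases Nat.even_or_odd k with he | ho
  · obtain ⟨a, rfl⟩ : ∃ a, k = 2 * a := by
      obtain ⟨a, ha⟩ := he; exact ⟨a, by omega⟩
    have h1 : π (alternatingWord i i' (2 * a)) = (σ i * σ i') ^ a := by
      rw [cs.prod_alternatingWord_eq_mul_pow]
      have : Even (2 * a) := ⟨a, by omega⟩
      rw [if_pos this]
      have : 2 * a / 2 = a := by omega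
      rw [this, one_mul]
    have h2 : π (alternatingWord i i' (2 * a + 1)) = σ i' * (σ i * σ i') ^ a := by
      rw [cs.prod_alternatingWord_eq_mul_pow]
      have hne : ¬ Even (2 * a + 1) := by
        rw [Nat.even_iff]; omega
      rw [if_neg hne]
      have : (2 * a + 1) / 2 = a := by omega
      rw [this]
    have ha : a + a = 2 * a := by omega
    rw [altGap, h1, h2, inv_q_pow, ← mul_assoc, simple_mul_pow_aux, mul_assoc, ← pow_add, ha]
  · obtain ⟨a, rfl⟩ := ho
    have h1 : π (alternatingWord i i' (2 * a + 1)) = σ i' * (σ i * σ i') ^ a := by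
      rw [cs.prod_alternatingWord_eq_mul_pow]
      have hne : ¬ Even (2 * a + 1) := by rw [Nat.even_iff]; omega
      rw [if_neg hne]
      have : (2 * a + 1) / 2 = a := by omega
      rw [this]
    have h2 : π (alternatingWord i i' (2 * a + 1 + 1)) = (σ i * σ i') ^ (a + 1) := by
      rw [cs.prod_alternatingWord_eq_mul_pow]
      have : Even (2 * a + 1 + 1) := ⟨a + 1, by omega⟩
      rw [if_pos this, one_mul]
      congr 1
      omega
    have ha : a + (a + 1) = 2 * a + 1 := by omega
    calc (π (alternatingWord i i' (2 * a + 1)))⁻¹ * π (alternatingWord i i' (2 * a + 1 + 1))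
        = (σ i' * (σ i * σ i') ^ a)⁻¹ * (σ i * σ i') ^ (a + 1) := by rw [h1, h2]
      _ = ((σ i * σ i') ^ a)⁻¹ * σ i' * (σ i * σ i') ^ (a + 1) := by
            rw [mul_inv_rev, cs.inv_simple]
      _ = (σ i' * σ i) ^ a * σ i' * (σ i * σ i') ^ (a + 1) := by rw [inv_q_pow]
      _ = σ i' * (σ i * σ i') ^ a * (σ i * σ i') ^ (a + 1) := by rw [simple_mul_pow_aux]
      _ = σ i' * (σ i * σ i') ^ (2 * a + 1) := by rw [mul_assoc, ← pow_add, ha]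

theorem altGap_add_M (i i' : B) (k : ℕ) :
    altGap cs i i' (k + M i i') = altGap cs i i' k := by
  rw [altGap_eq, altGap_eq, pow_add, cs.simple_mul_simple_pow, mul_one]

theorem indic_ris_braid (i i' : B) (u : W) :
    indic u (ris (alternatingWord i i' (2 * M i i'))) = 0 := by
  rw [ris_alternatingWord, map_reverse, indic_reverse]
  have h2 : 2 * M i i' = M i i' + M i i' := by omega
  rw [h2, range_add, map_append, indic_append, map_map]
  have h3 : (range (M i i')).map (altGap cs i i' ∘ (M i i' + ·))
      = (range (M i i')).map (altGap cs i i') := by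
    apply map_congr_left
    intro k _
    show altGap cs i i' (M i i' + k) = altGap cs i i' k
    rw [Nat.add_comm, altGap_add_M]
  rw [h3, CharTwo.add_self_eq_zero]

theorem prod_sigmaPerm_alt (i i' : B) (m : ℕ) :
    ((alternatingWord i i' (2 * m)).map (sigmaPerm cs)).prod = (sigmaPerm cs i * sigmaPerm cs i') ^ m := by
  induction m with
  | zero => simp [alternatingWord]
  | succ m ih =>
    have h1 : 2 * (m + 1) = (2 * m + 1) + 1 := by omega
    have h2 : ¬ Even (2 * m + 1) := by rw [Nat.even_iff]; omega
    have h3 : Even (2 * m) := ⟨m, by omega⟩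
    rw [h1, alt_succ_eq_cons, if_neg h2, alt_succ_eq_cons, if_pos h3]
    rw [map_cons, map_cons, prod_cons, prod_cons, ih, pow_succ']
    rw [mul_assoc]

theorem isLiftable_sigmaPerm : M.IsLiftable (sigmaPerm cs) := by
  intro i i'
  rw [← prod_sigmaPerm_alt]
  apply Equiv.ext
  intro p
  rw [prod_sigmaPerm_apply]
  have h1 : π (alternatingWord i i' (2 * M i i')) = 1 := by
    rw [cs.prod_alternatingWord_eq_mul_pow]
    have : Even (2 * M i i') := ⟨M i i', by omega⟩
    rw [if_pos this, one_mul]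
    have : 2 * M i i' / 2 = M i i' := by omega
    rw [this, cs.simple_mul_simple_pow]
  rw [h1, indic_ris_braid]
  simp

/-- The monoid homomorphism `W →* Perm (W × ZMod 2)`. -/
noncomputable def mu : W →* Equiv.Perm (W × ZMod 2) :=
  cs.lift ⟨sigmaPerm cs, isLiftable_sigmaPerm cs⟩

theorem mu_simple (i : B) : mu cs (σ i) = sigmaPerm cs i :=
  cs.lift_apply_simple (isLiftable_sigmaPerm cs) i

theorem mu_wordProd (ω : List B) : mu cs (π ω) = (ω.map (sigmaPerm cs)).prod := by
  unfold CoxeterSystem.wordProd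
  rw [map_list_prod, map_map]
  have h : (⇑(mu cs) ∘ cs.simple) = sigmaPerm cs := funext fun i => mu_simple cs i
  rw [h]

/-- The reflection cocycle. -/
noncomputable def eta (w t : W) : ZMod 2 := ((mu cs w) (t, 0)).2

theorem eta_wordProd (ω : List B) (t : W) : eta cs (π ω) t = indic t (ris ω) := by
  rw [eta, mu_wordProd, prod_sigmaPerm_apply]
  simp

theorem mu_apply (w : W) (p : W × ZMod 2) :
    mu cs w p = (w * p.1 * w⁻¹, p.2 + eta cs w p.1) := by
  obtain ⟨ω, rfl⟩ := cs.wordProd_surjective w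
  rw [mu_wordProd, prod_sigmaPerm_apply, eta_wordProd]

theorem eta_mul (a b t : W) : eta cs (a * b) t = eta cs b t + eta cs a (b * t * b⁻¹) := by
  have : eta cs (a * b) t = ((mu cs a) ((mu cs b) (t, 0))).2 := by
    rw [eta, map_mul]
    rfl
  rw [this, mu_apply, mu_apply]
  dsimp only
  rw [zero_add]

theorem eta_one (t : W) : eta cs 1 t = 0 := by
  rw [eta, map_one]
  rfl

theorem eta_simple (i : B) (t : W) :
    eta cs (σ i) t = if t = σ i then 1 else 0 := by
  rw [eta, mu_simple, sigmaPerm_apply, zero_add]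

theorem eta_inv (v t : W) : eta cs v⁻¹ t = eta cs v (v⁻¹ * t * v) := by
  have h0 : eta cs (v * v⁻¹) t = 0 := by rw [mul_inv_cancel, eta_one]
  rw [eta_mul] at h0
  have h1 : v⁻¹ * t * v⁻¹⁻¹ = v⁻¹ * t * v := by rw [inv_inv]
  rw [h1] at h0
  have := eq_neg_of_add_eq_zero_left h0
  rwa [CharTwo.neg_eq] at this

theorem length_mul_lt_of_eta_eq_one {w t : W} (h : eta cs w t = 1) :
    ℓ (w * t) < ℓ w := by
  obtain ⟨ω, hred, rfl⟩ := cs.exists_reduced_word' w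
  rw [eta_wordProd] at h
  have hmem : t ∈ ris ω := by
    apply mem_of_indic_ne_zero
    rw [h]
    exact one_ne_zero
  exact (cs.isRightInversion_of_mem_rightInvSeq hred hmem).2

theorem eta_self {t : W} (ht : cs.IsReflection t) : eta cs t t = 1 := by
  obtain ⟨v, i, rfl⟩ := ht
  set t := v * σ i * v⁻¹ with hts
  have hkey : v⁻¹ * t * v = σ i := by rw [hts]; group
  have h1 : eta cs t t = eta cs v⁻¹ t + eta cs (v * σ i) (v⁻¹ * t * v) := by
    have : t = (v * σ i) * v⁻¹ := by rw [hts, mul_assoc]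
    nth_rewrite 1 [this]
    rw [eta_mul, inv_inv]
  rw [hkey] at h1
  have h2 : eta cs (v * σ i) (σ i) = eta cs (σ i) (σ i) + eta cs v (σ i) := by
    rw [eta_mul]
    congr 1
    congr 1
    rw [cs.inv_simple]
    calc σ i * σ i * σ i = (σ i * σ i) * σ i := by group
    _ = σ i := by rw [cs.simple_mul_simple_self, one_mul]
  have h3 : eta cs (σ i) (σ i) = 1 := by rw [eta_simple, if_pos rfl]
  have h4 : eta cs v⁻¹ t = eta cs v (σ i) := by rw [eta_inv, hkey]
  rw [h1, h2, h3, h4]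
  have : ∀ a : ZMod 2, a + (1 + a) = 1 := by decide
  exact this _

theorem eta_eq_one_of_lt {w t : W} (ht : cs.IsReflection t) (h : ℓ (w * t) < ℓ w) :
    eta cs w t = 1 := by
  have hcases : ∀ a : ZMod 2, a = 0 ∨ a = 1 := by decide
  rcases hcases (eta cs w t) with h0 | h1
  · exfalso
    have h2 : eta cs (w * t) t = 1 := by
      rw [eta_mul, eta_self cs ht]
      have : t * t * t⁻¹ = t := by
        rw [ht.mul_self, one_mul, ht.inv]
      rw [this, h0, add_zero]
    have h3 := length_mul_lt_of_eta_eq_one cs h2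
    rw [mul_assoc, ht.mul_self, mul_one] at h3
    omega
  · exact h1

/-- **Strong exchange**. -/
theorem strong_exchange {w t : W} {ω : List B} (ht : cs.IsReflection t)
    (hlt : ℓ (w * t) < ℓ w) (heq : w = π ω) :
    ∃ j, ∃ _ : j < ω.length, (ris ω).getD j 1 = t ∧ w * t = π (ω.eraseIdx j) := by
  subst heq
  have h1 : eta cs (π ω) t = 1 := eta_eq_one_of_lt cs ht hlt
  rw [eta_wordProd] at h1
  have hmem : t ∈ ris ω := by
    apply mem_of_indic_ne_zero
    rw [h1]
    exact one_ne_zero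
  obtain ⟨j, hj, hje⟩ := List.mem_iff_getElem.mp hmem
  rw [cs.length_rightInvSeq] at hj
  have hgetD : (ris ω).getD j 1 = t := by
    rw [List.getD_eq_getElem _ 1 (by rw [cs.length_rightInvSeq]; exact hj)]
    exact hje
  refine ⟨j, hj, hgetD, ?_⟩
  rw [← hgetD]
  exact cs.wordProd_mul_getD_rightInvSeq ω j

/-! ### Deletion: every word has a reduced sublist with the same product -/

theorem wordProd_take_succ (ω : List B) (k : ℕ) (hk : k < ω.length) :
    π (ω.take (k + 1)) = π (ω.take k) * σ (ω[k]) := by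
  unfold CoxeterSystem.wordProd
  rw [map_take, map_take, prod_take_succ _ k (by simpa using hk)]
  congr 1
  rw [getElem_map]

theorem isReduced_nil : cs.IsReduced ([] : List B) := by
  show ℓ (π []) = _
  rw [cs.wordProd_nil, cs.length_one]
  rfl

theorem exists_reduced_sublist : ∀ n : ℕ, ∀ ω : List B, ω.length ≤ n →
    ∃ κ : List B, κ.Sublist ω ∧ cs.IsReduced κ ∧ π κ = π ω := by
  intro n
  induction n with
  | zero =>
    intro ω h
    have hω : ω = [] := eq_nil_of_length_eq_zero (by omega)
    subst hω
    exact ⟨[], Sublist.refl _, isReduced_nil cs, rfl⟩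
  | succ n ihn =>
    intro ω hlen
    by_cases hred : cs.IsReduced ω
    · exact ⟨ω, Sublist.refl _, hred, rfl⟩
    · have hex : ∃ f, ¬ cs.IsReduced (ω.take f) := ⟨ω.length, by rwa [take_length]⟩
      have hf : ¬ cs.IsReduced (ω.take (Nat.find hex)) := Nat.find_spec hex
      have hfle : Nat.find hex ≤ ω.length := Nat.find_le (by rwa [take_length])
      have hfpos : Nat.find hex ≠ 0 := by
        intro h0
        apply hf
        rw [h0, take_zero]
        exact isReduced_nil cs
      obtain ⟨k, hk⟩ : ∃ k, Nat.find hex = k + 1 := ⟨Nat.find hex - 1, by omega⟩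
      have hkl : k < ω.length := by omega
      have hredk : cs.IsReduced (ω.take k) := by
        have := Nat.find_min hex (m := k) (by omega)
        exact not_not.mp this
      have hlk : ℓ (π (ω.take k)) = k := by
        have := hredk
        unfold CoxeterSystem.IsReduced at this
        rw [this, length_take]
        omega
      rw [hk] at hf
      have hlsucc : ℓ (π (ω.take (k + 1))) ≠ k + 1 := by
        intro h
        apply hf
        unfold CoxeterSystem.IsReduced
        rw [h, length_take]
        omega
      rw [wordProd_take_succ cs ω k hkl] at hlsucc
      have hdesc : ℓ (π (ω.take k) * σ (ω[k])) < ℓ (π (ω.take k)) := by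
        rcases cs.length_mul_simple (π (ω.take k)) (ω[k]) with h | h
        · omega
        · omega
      obtain ⟨j, hj, _, hprod⟩ := strong_exchange cs (cs.isReflection_simple (ω[k])) hdesc rfl
      set ω' := (ω.take k).eraseIdx j ++ ω.drop (k + 1) with hω'
      have hπ : π ω' = π ω := by
        rw [hω', cs.wordProd_append, ← hprod, ← wordProd_take_succ cs ω k hkl,
          ← cs.wordProd_append, take_append_drop]
      have hsub : ω'.Sublist ω := by
        have h1 : ((ω.take k).eraseIdx j).Sublist (ω.take k) := eraseIdx_sublist _ j
        have h2 : ω'.Sublist (ω.take k ++ ω.drop (k + 1)) := h1.append (Sublist.refl _)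
        have h3 : ω.take k ++ ω.drop (k + 1) = ω.eraseIdx k := (eraseIdx_eq_take_drop_succ ω k).symm
        rw [h3] at h2
        exact h2.trans (eraseIdx_sublist ω k)
      have hlen' : ω'.length ≤ n := by
        have e0 : (ω.take k).length = k := by rw [length_take]; omega
        have e1 : ((ω.take k).eraseIdx j).length + 1 = (ω.take k).length :=
          length_eraseIdx_add_one (by omega)
        have e2 : (ω.drop (k + 1)).length = ω.length - (k + 1) := by rw [length_drop]
        rw [hω', length_append]
        omega
      obtain ⟨κ, hs, hr, hp⟩ := ihn ω' hlen'
      exact ⟨κ, hs.trans hsub, hr, by rw [hp, hπ]⟩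

theorem exists_reduced_sublist' (ω : List B) :
    ∃ κ : List B, κ.Sublist ω ∧ cs.IsReduced κ ∧ π κ = π ω :=
  exists_reduced_sublist cs ω.length ω le_rfl

/-! ### The chain order -/

/-- One step of the Bruhat chain order: multiply by a reflection on the right,
decreasing length. -/
def BStep (x y : W) : Prop := ∃ t, cs.IsReflection t ∧ y = x * t ∧ ℓ y < ℓ x

/-- Chain version of the Bruhat order. -/
def BLe (w u : W) : Prop := Relation.ReflTransGen (BStep cs) w u

theorem ble_refl (w : W) : BLe cs w w := Relation.ReflTransGen.refl

theorem ble_trans {w x u : W} (h1 : BLe cs w x) (h2 : BLe cs x u) : BLe cs w u :=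
  Relation.ReflTransGen.trans h1 h2

theorem ble_tail {w x u : W} (h1 : BLe cs w x) (h2 : BStep cs x u) : BLe cs w u :=
  Relation.ReflTransGen.tail h1 h2

theorem ble_single {w u : W} (h : BStep cs w u) : BLe cs w u :=
  Relation.ReflTransGen.single h

theorem ble_length_le {w u : W} (h : BLe cs w u) : ℓ u ≤ ℓ w := by
  induction h with
  | refl => exact le_rfl
  | tail h1 h2 ih =>
    obtain ⟨t, _, rfl, hlt⟩ := h2
    omega

theorem ble_length_lt {w u : W} (h : BLe cs w u) (hne : u ≠ w) : ℓ u < ℓ w := by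
  induction h with
  | refl => exact absurd rfl hne
  | tail h1 h2 _ =>
    obtain ⟨t, _, rfl, hlt⟩ := h2
    have := ble_length_le cs h1
    omega

theorem ble_one (w : W) : BLe cs w 1 := by
  generalize hn : ℓ w = n
  induction n using Nat.strong_induction_on generalizing w with
  | _ n ihn =>
    by_cases hw : w = 1
    · rw [hw]; exact ble_refl cs 1
    · obtain ⟨i, hi⟩ := cs.exists_rightDescent_of_ne_one hw
      have hi' : ℓ (w * σ i) < ℓ w := hi
      have hstep : BLe cs w (w * σ i) :=
        ble_single cs ⟨σ i, cs.isReflection_simple i, rfl, hi'⟩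
      exact ble_trans cs hstep (ihn (ℓ (w * σ i)) (by omega) (w * σ i) rfl)

theorem isReflection_conj_simple (i : B) {t : W} (ht : cs.IsReflection t) :
    cs.IsReflection (σ i * t * σ i) := by
  have := ht.conj (σ i)
  rwa [cs.inv_simple] at this

/-- The lemma bank: the lifting properties and the subword-to-chain property,
proven by mutual strong induction on length. -/
theorem bank : ∀ n : ℕ,
    (∀ w t, ∀ i : B, ℓ w ≤ n → cs.IsReflection t → ℓ (w * t) < ℓ w →
      ℓ (w * σ i) < ℓ w → BLe cs w (w * t * σ i)) ∧
    (∀ w u, ∀ i : B, ℓ w ≤ n → BLe cs w u → ℓ (w * σ i) < ℓ w →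
      ℓ u < ℓ (u * σ i) → BLe cs w (u * σ i)) ∧
    (∀ w u, ∀ i : B, ℓ w ≤ n → BLe cs w u → ℓ w < ℓ (w * σ i) →
      ℓ u < ℓ (u * σ i) → BLe cs (w * σ i) (u * σ i)) ∧
    (∀ ρ κ : List B, ρ.length ≤ n → cs.IsReduced ρ → κ.Sublist ρ →
      BLe cs (π ρ) (π κ)) := by
  intro n
  induction n using Nat.strong_induction_on with
  | _ n ihn =>
  -- X4
  have hX4 : ∀ w t, ∀ i : B, ℓ w ≤ n → cs.IsReflection t → ℓ (w * t) < ℓ w →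
      ℓ (w * σ i) < ℓ w → BLe cs w (w * t * σ i) := by
    intro w t i hw ht hlt hdesc
    obtain ⟨σw, hredσ, heqσ⟩ := cs.exists_reduced_word' (w * σ i)
    have hσlen : σw.length = ℓ (w * σ i) := by
      have := hredσ
      unfold CoxeterSystem.IsReduced at this
      rw [← heqσ] at this
      omega
    have hldesc : ℓ (w * σ i) + 1 = ℓ w := by
      rcases cs.length_mul_simple w i with h | h
      · omega
      · exact h
    have hπρ : w = π (σw ++ [i]) := by
      rw [cs.wordProd_append, ← heqσ, cs.wordProd_singleton, mul_assoc,
        cs.simple_mul_simple_self, mul_one]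
    have hρred : cs.IsReduced (σw ++ [i]) := by
      unfold CoxeterSystem.IsReduced
      rw [← hπρ, length_append, length_singleton]
      omega
    obtain ⟨j, hj, hgetD, hprod⟩ := strong_exchange cs ht hlt hπρ
    rw [length_append, length_singleton] at hj
    by_cases hjlt : j < σw.length
    · have herase : (σw ++ [i]).eraseIdx j = σw.eraseIdx j ++ [i] :=
        eraseIdx_append_of_lt_length hjlt [i]
      have h3 : w * t * σ i = π (σw.eraseIdx j) := by
        rw [hprod, herase, cs.wordProd_append, cs.wordProd_singleton, mul_assoc,
          cs.simple_mul_simple_self, mul_one]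
      have hlvl : σw.length < n := by omega
      have hP3 := (ihn σw.length hlvl).2.2.2 σw (σw.eraseIdx j) le_rfl hredσ
        (eraseIdx_sublist σw j)
      have hstep : BLe cs w (π σw) := by
        rw [← heqσ]
        exact ble_single cs ⟨σ i, cs.isReflection_simple i, rfl, hdesc⟩
      rw [h3]
      exact ble_trans cs hstep hP3
    · have hj' : j = σw.length := by omega
      have hlast : (ris (σw ++ [i])).getD j 1 = σ i := by
        rw [cs.getD_rightInvSeq]
        have hdrop : (σw ++ [i]).drop (j + 1) = [] := by
          apply drop_eq_nil_of_le
          rw [length_append, length_singleton]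
          omega
        have hget : (σw ++ [i])[j]? = some i := by
          rw [hj']
          rw [getElem?_append_right (by omega)]
          simp
        rw [hdrop, hget, cs.wordProd_nil]
        simp
      have ht_eq : t = σ i := by rw [← hgetD, hlast]
      rw [ht_eq, mul_assoc, cs.simple_mul_simple_self, mul_one]
      exact ble_refl cs w
  -- P4
  have hP4 : ∀ w u, ∀ i : B, ℓ w ≤ n → BLe cs w u → ℓ (w * σ i) < ℓ w →
      ℓ u < ℓ (u * σ i) → BLe cs w (u * σ i) := by
    intro w u i hw hble hdw
    induction hble with
    | refl => intro hau; omega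
    | @tail x u' h1 h2 ih =>
      intro hau
      obtain ⟨t, ht, rfl, hlt⟩ := h2
      have hu'asc : ℓ (x * t * σ i) = ℓ (x * t) + 1 := by
        rcases cs.length_mul_simple (x * t) i with h | h
        · exact h
        · omega
      rcases cs.length_mul_simple x i with hxasc | hxdesc
      · have hbx : BLe cs w (x * σ i) := ih (by omega)
        refine ble_tail cs hbx ⟨σ i * t * σ i, isReflection_conj_simple cs i ht, ?_, ?_⟩
        · calc x * t * σ i = x * (σ i * σ i) * t * σ i := by
                rw [cs.simple_mul_simple_self, mul_one]
          _ = x * σ i * (σ i * t * σ i) := by group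
        · omega
      · by_cases hxw : x = w
        · subst hxw
          exact hX4 x t i hw ht hlt hdw
        · have hxlt : ℓ x < ℓ w := ble_length_lt cs h1 hxw
          have hbank := (ihn (ℓ x) (by omega)).2.1
          have h5 := hbank x (x * t) i le_rfl
            (ble_single cs ⟨t, ht, rfl, hlt⟩) (by omega) hau
          exact ble_trans cs h1 h5
  -- P1
  have hP1 : ∀ w u, ∀ i : B, ℓ w ≤ n → BLe cs w u → ℓ w < ℓ (w * σ i) →
      ℓ u < ℓ (u * σ i) → BLe cs (w * σ i) (u * σ i) := by
    intro w u i hw hble hwa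
    induction hble with
    | refl => intro _; exact ble_refl cs _
    | @tail x u' h1 h2 ih =>
      intro hau
      obtain ⟨t, ht, rfl, hlt⟩ := h2
      have hu'asc : ℓ (x * t * σ i) = ℓ (x * t) + 1 := by
        rcases cs.length_mul_simple (x * t) i with h | h
        · exact h
        · omega
      rcases cs.length_mul_simple x i with hxasc | hxdesc
      · have hbx : BLe cs (w * σ i) (x * σ i) := ih (by omega)
        refine ble_tail cs hbx ⟨σ i * t * σ i, isReflection_conj_simple cs i ht, ?_, ?_⟩
        · calc x * t * σ i = x * (σ i * σ i) * t * σ i := by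
                rw [cs.simple_mul_simple_self, mul_one]
          _ = x * σ i * (σ i * t * σ i) := by group
        · omega
      · have hxw : x ≠ w := by
          intro h
          rw [h] at hxdesc
          omega
        have hxlt : ℓ x < ℓ w := ble_length_lt cs h1 hxw
        have hbank := (ihn (ℓ x) (by omega)).2.1
        have h5 := hbank x (x * t) i le_rfl
          (ble_single cs ⟨t, ht, rfl, hlt⟩) (by omega) hau
        have h6 : BLe cs (w * σ i) w :=
          ble_single cs ⟨σ i, cs.isReflection_simple i, by
            rw [mul_assoc, cs.simple_mul_simple_self, mul_one], by omega⟩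
        exact ble_trans cs (ble_trans cs h6 h1) h5
  -- P3
  have hP3 : ∀ ρ κ : List B, ρ.length ≤ n → cs.IsReduced ρ → κ.Sublist ρ →
      BLe cs (π ρ) (π κ) := by
    intro ρ κ hρn hredρ hsubκ
    obtain ⟨κ', hsub', hred', hπ'⟩ := exists_reduced_sublist' cs κ
    rw [← hπ']
    have hsubκ' : κ'.Sublist ρ := hsub'.trans hsubκ
    clear hπ' hsub' hsubκ κ
    rcases eq_nil_or_concat' ρ with hnil | ⟨ρ₁, j, rfl⟩
    · subst hnil
      rw [sublist_nil.mp hsubκ']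
      exact ble_refl cs _
    · have hρ₁red : cs.IsReduced ρ₁ := by
        have h := CoxeterSystem.IsReduced.take hredρ ρ₁.length
        rwa [take_left] at h
      have hρ₁len : ℓ (π ρ₁) = ρ₁.length := hρ₁red
      have hρlen : ℓ (π (ρ₁ ++ [j])) = ρ₁.length + 1 := by
        have := hredρ
        unfold CoxeterSystem.IsReduced at this
        rw [this, length_append, length_singleton]
      have hw : π (ρ₁ ++ [j]) = π ρ₁ * σ j := by
        rw [cs.wordProd_append, cs.wordProd_singleton]
      have hstepdown : BLe cs (π (ρ₁ ++ [j])) (π ρ₁) := by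
        refine ble_single cs ⟨σ j, cs.isReflection_simple j, ?_, by omega⟩
        rw [hw, mul_assoc, cs.simple_mul_simple_self, mul_one]
      have hcase : κ'.Sublist ρ₁ ∨ ∃ κ₁, κ' = κ₁ ++ [j] ∧ κ₁.Sublist ρ₁ := by
        have hrev := hsubκ'.reverse
        rw [reverse_append, reverse_singleton] at hrev
        simp only [singleton_append] at hrev
        rcases sublist_cons_iff.mp hrev with h | ⟨r, hr, hrsub⟩
        · left
          have := h.reverse
          rwa [reverse_reverse, reverse_reverse] at this
        · right
          refine ⟨r.reverse, ?_, ?_⟩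
          · rw [← reverse_reverse κ', hr, reverse_cons]
          · have := hrsub.reverse
            rwa [reverse_reverse] at this
      have hlvl : ρ₁.length < n := by
        rw [length_append, length_singleton] at hρn
        omega
      rcases hcase with hcase | ⟨κ₁, rfl, hκ₁sub⟩
      · have := (ihn ρ₁.length hlvl).2.2.2 ρ₁ κ' le_rfl hρ₁red hcase
        exact ble_trans cs hstepdown this
      · have hκ₁red : cs.IsReduced κ₁ := by
          have h := CoxeterSystem.IsReduced.take hred' κ₁.length
          rwa [take_left] at h
        have hκ'len : ℓ (π (κ₁ ++ [j])) = κ₁.length + 1 := by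
          have := hred'
          unfold CoxeterSystem.IsReduced at this
          rw [this, length_append, length_singleton]
        have hble := (ihn ρ₁.length hlvl).2.2.2 ρ₁ κ₁ le_rfl hρ₁red hκ₁sub
        have hP1' := (ihn ρ₁.length hlvl).2.2.1 (π ρ₁) (π κ₁) j (le_of_eq hρ₁len) hble
          (by rw [← hw]; omega)
          (by
            have h1 : ℓ (π κ₁) = κ₁.length := hκ₁red
            have h2 : π κ₁ * σ j = π (κ₁ ++ [j]) := by
              rw [cs.wordProd_append, cs.wordProd_singleton]
            rw [h2]
            omega)
        rw [← hw] at hP1'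
        have h2 : π κ₁ * σ j = π (κ₁ ++ [j]) := by
          rw [cs.wordProd_append, cs.wordProd_singleton]
        rwa [h2] at hP1'
  exact ⟨hX4, hP4, hP1, hP3⟩

/-! ### Corollaries and the main theorem -/

theorem ble_mul_simple {w u : W} {i : B} (h : BLe cs w u) (hd : ℓ (w * σ i) < ℓ w) :
    BLe cs w (u * σ i) := by
  rcases cs.length_mul_simple u i with hasc | hdesc
  · exact (bank cs (ℓ w)).2.1 w u i le_rfl h hd (by omega)
  · exact ble_tail cs h ⟨σ i, cs.isReflection_simple i, rfl, by omega⟩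

theorem ble_exists_sublist {w v : W} (h : BLe cs w v) {ρ : List B}
    (hred : cs.IsReduced ρ) (heq : w = π ρ) :
    ∃ κ : List B, κ.Sublist ρ ∧ cs.IsReduced κ ∧ π κ = v := by
  induction h with
  | refl => exact ⟨ρ, Sublist.refl _, hred, heq.symm⟩
  | @tail x u' h1 h2 ih =>
    obtain ⟨κ, hsub, hredκ, hπ⟩ := ih
    obtain ⟨t, ht, rfl, hlt⟩ := h2
    obtain ⟨j, hj, _, hprod⟩ := strong_exchange cs ht hlt hπ.symm
    obtain ⟨κ'', hs'', hr'', hp''⟩ := exists_reduced_sublist' cs (κ.eraseIdx j)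
    refine ⟨κ'', (hs''.trans (eraseIdx_sublist κ j)).trans hsub, hr'', ?_⟩
    rw [hp'', ← hprod]

theorem mem_closure_word {X : Set B} {v : W}
    (h : v ∈ Subgroup.closure (cs.simple '' X)) :
    ∃ ω : List B, (∀ i ∈ ω, i ∈ X) ∧ v = π ω := by
  induction h using Subgroup.closure_induction with
  | mem x hx =>
    obtain ⟨i, hi, rfl⟩ := hx
    exact ⟨[i], by simpa using hi, (cs.wordProd_singleton i).symm⟩
  | one => exact ⟨[], by simp, (cs.wordProd_nil).symm⟩
  | mul a b _ _ iha ihb =>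
    obtain ⟨ω₁, h1, rfl⟩ := iha
    obtain ⟨ω₂, h2, rfl⟩ := ihb
    refine ⟨ω₁ ++ ω₂, ?_, (cs.wordProd_append ω₁ ω₂).symm⟩
    intro i hi
    rcases mem_append.mp hi with h | h
    · exact h1 i h
    · exact h2 i h
  | inv a _ iha =>
    obtain ⟨ω, h1, rfl⟩ := iha
    refine ⟨ω.reverse, ?_, (cs.wordProd_reverse ω).symm⟩
    intro i hi
    exact h1 i (mem_reverse.mp hi)

theorem ble_of_word {w : W} {X : Set B} (hX : ∀ i ∈ X, ℓ (w * σ i) < ℓ w)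
    (ω : List B) (hω : ∀ i ∈ ω, i ∈ X) : BLe cs w (π ω) := by
  induction ω using List.reverseRecOn with
  | nil =>
    rw [cs.wordProd_nil]
    exact ble_one cs w
  | append_singleton ω k ih =>
    have h1 : BLe cs w (π ω) := ih (fun i hi => hω i (mem_append.mpr (Or.inl hi)))
    have h2 : k ∈ X := hω k (by simp)
    have h3 : π (ω ++ [k]) = π ω * σ k := by
      rw [cs.wordProd_append, cs.wordProd_singleton]
    rw [h3]
    exact ble_mul_simple cs h1 (hX k h2)

end DescentSpherical

/-- For any `w`, the set `I^-(w) = {i : ℓ(w sᵢ) = ℓ(w) - 1}` is spherical: the standard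
parabolic subgroup it generates is finite. -/
theorem descent_set_spherical {B W : Type*} [Group W] {M : CoxeterMatrix B}
    (cs : CoxeterSystem M W) (w : W) :
    Set.Finite ((Subgroup.closure
      (cs.simple '' {i : B | cs.length (w * cs.simple i) + 1 = cs.length w}) :
        Subgroup W) : Set W) := by
  obtain ⟨ρ, hred, heq⟩ := cs.exists_reduced_word' w
  have hX : ∀ i ∈ {i : B | cs.length (w * cs.simple i) + 1 = cs.length w},
      cs.length (w * cs.simple i) < cs.length w := by
    intro i hi
    have : cs.length (w * cs.simple i) + 1 = cs.length w := hi
    omega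
  apply Set.Finite.subset (Set.Finite.image (fun κ => cs.wordProd κ) (ρ.sublists.finite_toSet))
  intro v hv
  obtain ⟨ω, hω, rfl⟩ := DescentSpherical.mem_closure_word cs hv
  have hble : DescentSpherical.BLe cs w (cs.wordProd ω) := DescentSpherical.ble_of_word cs hX ω hω
  obtain ⟨κ, hsub, _, hπ⟩ := DescentSpherical.ble_exists_sublist cs hble hred heq
  exact ⟨κ, by simpa using hsub, hπ⟩
end

section
/- Let Γ be a spherical Coxeter matrix (W_Γ is finite) and let {α, β} be a 2-partition of the index set I such that both the alternating product prod_{m}(r_α, r_β) and prod_{m}(r_β, r_α) of m = |r_α r_β| factors satisfy ℓ(prod_m(r_α,r_β)) = Σ_m(ℓ(r_α),ℓ(r_β)) and similarly with α, β swapped. Then prod_m(r_α, r_β) = prod_m(r_β, r_α) = r_I, the longest element of W_Γ. -/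
/-- Alternating product `xyxy⋯` of `n` factors. -/
def altProd {W : Type*} [Monoid W] (x y : W) : ℕ → W
  | 0 => 1
  | n + 1 => x * altProd y x n

/-- Alternating sum `a + b + a + ⋯` of `n` terms. -/
def altSum (a b : ℕ) : ℕ → ℕ
  | 0 => 0
  | n + 1 => a + altSum b a n

section GroupLemmas

variable {W : Type*} [Group W]

theorem altProd_zero (x y : W) : altProd x y 0 = 1 := rfl

theorem altProd_succ (x y : W) (n : ℕ) : altProd x y (n + 1) = x * altProd y x n := rfl

theorem altProd_add_two (x y : W) (n : ℕ) :
    altProd x y (n + 2) = x * y * altProd x y n := by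
  rw [altProd_succ, altProd_succ, mul_assoc]

theorem altProd_two_mul (x y : W) (k : ℕ) : altProd x y (2 * k) = (x * y) ^ k := by
  induction k with
  | zero => simp [altProd_zero]
  | succ k ih =>
    have h : 2 * (k + 1) = 2 * k + 2 := by ring
    rw [h, altProd_add_two, ih, pow_succ']

theorem altProd_two_mul_add_one (x y : W) (k : ℕ) :
    altProd x y (2 * k + 1) = (x * y) ^ k * x := by
  induction k with
  | zero => simp [altProd_succ, altProd_zero]
  | succ k ih =>
    have h : 2 * (k + 1) + 1 = (2 * k + 1) + 2 := by ring
    rw [h, altProd_add_two, ih, pow_succ']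
    simp [mul_assoc]

theorem mul_pow_shift (x y : W) (k : ℕ) : x * (y * x) ^ k = (x * y) ^ k * x := by
  induction k with
  | zero => simp
  | succ k ih =>
    rw [pow_succ, ← mul_assoc, ih, pow_succ]
    group

theorem altProd_append (x y : W) (a b : ℕ) :
    altProd x y (a + b) =
      altProd x y a * (if Even a then altProd x y b else altProd y x b) := by
  induction a generalizing x y with
  | zero => simp [altProd_zero]
  | succ a ih =>
    have h1 : a + 1 + b = (a + b) + 1 := by ring
    rw [h1, altProd_succ, ih y x, altProd_succ]
    by_cases h : Even a
    · simp [Nat.even_add_one, h, mul_assoc]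
    · simp [Nat.even_add_one, h, mul_assoc]

theorem alt_conj {x y : W} (hx : x * x = 1) (hy : y * y = 1) {n : ℕ}
    (h : (x * y) ^ n = 1) :
    (altProd y x n)⁻¹ * x * altProd y x n = if Even n then x else y := by
  have hxi : x⁻¹ = x := inv_eq_of_mul_eq_one_right hx
  have hyi : y⁻¹ = y := inv_eq_of_mul_eq_one_right hy
  have hyx : y * x = (x * y)⁻¹ := by rw [mul_inv_rev, hxi, hyi]
  rcases Nat.even_or_odd n with he | ho
  · obtain ⟨k, hk⟩ := he
    have hk2 : n = 2 * k := by omega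
    subst hk2
    rw [if_pos (by exact ⟨k, by omega⟩)]
    rw [altProd_two_mul, hyx, inv_pow, inv_inv]
    have key : (x * y) ^ k * x = x * ((x * y) ^ k)⁻¹ := by
      rw [← mul_pow_shift, hyx, inv_pow]
    rw [key, mul_assoc, ← mul_inv_rev, ← pow_add, show k + k = 2 * k by ring, h, inv_one,
      mul_one]
  · obtain ⟨k, hk⟩ := ho
    subst hk
    rw [if_neg (by simp [Nat.even_add_one, parity_simps])]
    rw [altProd_two_mul_add_one]
    have e1 : ((y * x) ^ k)⁻¹ = (x * y) ^ k := by rw [hyx, inv_pow, inv_inv]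
    calc ((y * x) ^ k * y)⁻¹ * x * ((y * x) ^ k * y)
        = y * ((x * y) ^ k * (x * (y * x) ^ k)) * y := by
          rw [mul_inv_rev, hyi, ← e1]; group
      _ = y * ((x * y) ^ k * ((x * y) ^ k * x)) * y := by rw [mul_pow_shift]
      _ = y * (x * y) ^ (2 * k + 1) := by
          rw [← mul_assoc ((x * y) ^ k), ← pow_add, show k + k = 2 * k by ring, pow_succ]
          group
      _ = y := by rw [h, mul_one]

theorem alt_mul_alt {x y : W} (hx : x * x = 1) (hy : y * y = 1) {n : ℕ}
    (h : (x * y) ^ n = 1) : altProd x y n * altProd y x n = 1 := by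
  have hxi : x⁻¹ = x := inv_eq_of_mul_eq_one_right hx
  have hyi : y⁻¹ = y := inv_eq_of_mul_eq_one_right hy
  have hyx : y * x = (x * y)⁻¹ := by rw [mul_inv_rev, hxi, hyi]
  rcases Nat.even_or_odd n with he | ho
  · obtain ⟨k, hk⟩ := he
    have hk2 : n = 2 * k := by omega
    subst hk2
    rw [altProd_two_mul, altProd_two_mul, hyx, inv_pow, mul_inv_cancel]
  · obtain ⟨k, hk⟩ := ho
    subst hk
    rw [altProd_two_mul_add_one, altProd_two_mul_add_one]
    calc (x * y) ^ k * x * ((y * x) ^ k * y)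
        = (x * y) ^ k * (x * (y * x) ^ k) * y := by group
      _ = (x * y) ^ k * ((x * y) ^ k * x) * y := by rw [mul_pow_shift]
      _ = (x * y) ^ (2 * k + 1) := by
          rw [← mul_assoc ((x * y) ^ k), ← pow_add, show k + k = 2 * k by ring, pow_succ]
          group
      _ = 1 := h

end GroupLemmas

theorem altSum_succ (a b n : ℕ) : altSum a b (n + 1) = a + altSum b a n := rfl

section CoxeterAux

open List CoxeterSystem

variable {B W : Type*} [Group W] {M : CoxeterMatrix B} (cs : CoxeterSystem M W)

local prefix:100 "ℓ" => cs.length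
local prefix:100 "σ" => cs.simple
local prefix:100 "π" => cs.wordProd

/-- Length of an alternating product is at most the alternating sum of lengths. -/
theorem length_altProd_le (n : ℕ) : ∀ x y : W,
    ℓ (altProd x y n) ≤ altSum (ℓ x) (ℓ y) n := by
  induction n with
  | zero => intro x y; simp [altProd_zero, altSum]
  | succ n ih =>
    intro x y
    rw [altProd_succ, altSum_succ]
    calc ℓ (x * altProd y x n) ≤ ℓ x + ℓ (altProd y x n) := cs.length_mul_le _ _
    _ ≤ ℓ x + altSum (ℓ y) (ℓ x) n := by have := ih y x; omega

theorem length_altProd_first {n : ℕ} {x y : W}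
    (h : ℓ (altProd x y (n + 1)) = altSum (ℓ x) (ℓ y) (n + 1)) :
    ℓ (altProd x y (n + 1)) = ℓ x + ℓ (altProd y x n) ∧
      ℓ (altProd y x n) = altSum (ℓ y) (ℓ x) n := by
  have h1 := cs.length_mul_le x (altProd y x n)
  have h2 := length_altProd_le cs n y x
  rw [altProd_succ] at h ⊢
  rw [altSum_succ] at h
  omega

theorem length_altProd_last : ∀ (n : ℕ) (x y : W),
    ℓ (altProd x y (n + 1)) = altSum (ℓ x) (ℓ y) (n + 1) →
    ∃ w : W, altProd x y (n + 1) = w * (if Even n then x else y) ∧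
      ℓ (altProd x y (n + 1)) = ℓ w + ℓ (if Even n then x else y) := by
  intro n
  induction n with
  | zero =>
    intro x y _
    exact ⟨1, by simp [altProd_succ, altProd_zero], by simp [altProd_succ, altProd_zero]⟩
  | succ n ih =>
    intro x y h
    obtain ⟨hsplit, h'⟩ := length_altProd_first cs h
    obtain ⟨w', hw', hlw'⟩ := ih y x h'
    set z := if Even n then y else x with hz
    have hz' : (if Even (n + 1) then x else y) = z := by
      by_cases hn : Even n <;> simp [Nat.even_add_one, hn, hz]
    rw [hz']
    refine ⟨x * w', ?_, ?_⟩
    · rw [altProd_succ, hw', mul_assoc]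
    · have e1 : ℓ (x * w') ≤ ℓ x + ℓ w' := cs.length_mul_le x w'
      have e2 : ℓ (altProd x y (n + 1 + 1)) ≤ ℓ (x * w') + ℓ z := by
        rw [altProd_succ, hw', ← mul_assoc x w' z]
        exact cs.length_mul_le _ _
      omega

end CoxeterAux

/-- `x` is the longest element of the standard parabolic subgroup generated by `α`. -/
def IsLongestOf {B W : Type*} [Group W] {M : CoxeterMatrix B} (cs : CoxeterSystem M W)
    (α : Set B) (x : W) : Prop :=
  x ∈ Subgroup.closure (cs.simple '' α) ∧
  (∀ u ∈ Subgroup.closure (cs.simple '' α), cs.length u ≤ cs.length x) ∧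
  (∀ u ∈ Subgroup.closure (cs.simple '' α), cs.length u = cs.length x → u = x)

section LongestAux

open List CoxeterSystem

variable {B W : Type*} [Group W] {M : CoxeterMatrix B} (cs : CoxeterSystem M W)

theorem IsLongestOf.inv_eq {α : Set B} {x : W} (h : IsLongestOf cs α x) : x⁻¹ = x := by
  refine h.2.2 x⁻¹ (Subgroup.inv_mem _ h.1) ?_
  exact cs.length_inv x

theorem IsLongestOf.mul_self {α : Set B} {x : W} (h : IsLongestOf cs α x) : x * x = 1 := by
  nth_rewrite 1 [← h.inv_eq cs]
  exact inv_mul_cancel x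

theorem IsLongestOf.length_mul_simple_lt {α : Set B} {x : W} (h : IsLongestOf cs α x)
    {i : B} (hi : i ∈ α) : cs.length (x * cs.simple i) < cs.length x := by
  have hs : cs.simple i ∈ Subgroup.closure (cs.simple '' α) :=
    Subgroup.subset_closure (Set.mem_image_of_mem _ hi)
  have hle := h.2.1 (x * cs.simple i) (Subgroup.mul_mem _ h.1 hs)
  exact lt_of_le_of_ne hle (cs.length_mul_simple_ne x i)

theorem IsLongestOf.length_simple_mul_lt {α : Set B} {x : W} (h : IsLongestOf cs α x)
    {i : B} (hi : i ∈ α) : cs.length (cs.simple i * x) < cs.length x := by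
  have hs : cs.simple i ∈ Subgroup.closure (cs.simple '' α) :=
    Subgroup.subset_closure (Set.mem_image_of_mem _ hi)
  have hle := h.2.1 (cs.simple i * x) (Subgroup.mul_mem _ hs h.1)
  exact lt_of_le_of_ne hle (cs.length_simple_mul_ne x i)

theorem IsLongestOf.length_le_univ {x : W} (h : IsLongestOf cs Set.univ x) (u : W) :
    cs.length u ≤ cs.length x := by
  refine h.2.1 u ?_
  rw [Set.image_univ, cs.subgroup_closure_range_simple]
  trivial

end LongestAux

section Cocycle

open List CoxeterSystem

open scoped Classical

/-- The alternating word `[i, i', i, i', ...]` of length `n`. -/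
def awd {B : Type*} (i i' : B) : ℕ → List B
  | 0 => []
  | n + 1 => i :: awd i' i n

/-- Count occurrences of `w` in a list (classical version). -/
noncomputable def cnt {W : Type*} (w : W) : List W → ℕ
  | [] => 0
  | a :: l => (if a = w then 1 else 0) + cnt w l

theorem cnt_nil {W : Type*} (w : W) : cnt w [] = 0 := rfl

theorem cnt_cons {W : Type*} (w a : W) (l : List W) :
    cnt w (a :: l) = (if a = w then 1 else 0) + cnt w l := rfl

theorem cnt_append {W : Type*} (w : W) (l₁ l₂ : List W) :
    cnt w (l₁ ++ l₂) = cnt w l₁ + cnt w l₂ := by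
  induction l₁ with
  | nil => simp [cnt_nil]
  | cons a l ih => simp [cnt_cons, ih]; ring

theorem mem_of_cnt_ne_zero {W : Type*} {w : W} {l : List W} (h : cnt w l ≠ 0) : w ∈ l := by
  induction l with
  | nil => simp [cnt_nil] at h
  | cons a l ih =>
    rw [cnt_cons] at h
    by_cases ha : a = w
    · exact ha ▸ (List.mem_cons_self (a := a) (l := l))
    · simp only [ha, if_false, zero_add] at h
      exact List.mem_cons_of_mem a (ih h)

theorem awd_length {B : Type*} (i i' : B) (n : ℕ) : (awd i i' n).length = n := by
  induction n generalizing i i' with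
  | zero => rfl
  | succ n ih => simp [awd, ih]

theorem awd_drop {B : Type*} : ∀ (k n : ℕ) (i i' : B),
    (awd i i' n).drop k = if Even k then awd i i' (n - k) else awd i' i (n - k) := by
  intro k
  induction k with
  | zero => intro n i i'; simp
  | succ k ih =>
    intro n i i'
    cases n with
    | zero =>
      rcases Nat.even_or_odd (k + 1) with h | h
      · simp [awd, h]
      · simp [awd, Nat.not_even_iff_odd.mpr h]
    | succ n =>
      show (awd i i' (n + 1)).drop (k + 1) = _
      rw [show awd i i' (n + 1) = i :: awd i' i n from rfl, List.drop_succ_cons, ih n i' i]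
      rcases Nat.even_or_odd k with h | h
      · have : ¬ Even (k + 1) := by simp [Nat.even_add_one, h]
        simp [h, this, Nat.succ_sub_succ]
      · have h' : ¬ Even k := Nat.not_even_iff_odd.mpr h
        have : Even (k + 1) := by simp [Nat.even_add_one, h']
        simp [h', this, Nat.succ_sub_succ]

theorem awd_get? {B : Type*} {k n : ℕ} (h : k < n) (i i' : B) :
    (awd i i' n)[k]? = some (if Even k then i else i') := by
  have h1 : (awd i i' n)[k]? = ((awd i i' n).drop k)[0]? := by
    rw [List.getElem?_drop, Nat.add_zero]
  rw [h1, awd_drop k n i i']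
  obtain ⟨m, hm⟩ : ∃ m, n - k = m + 1 := ⟨n - k - 1, by omega⟩
  rcases Nat.even_or_odd k with he | ho
  · simp [he, hm, awd]
  · simp [Nat.not_even_iff_odd.mpr ho, hm, awd]

variable {B W : Type*} [Group W] {M : CoxeterMatrix B} (cs : CoxeterSystem M W)

theorem awd_wordProd (n : ℕ) (i i' : B) :
    cs.wordProd (awd i i' n) = altProd (cs.simple i) (cs.simple i') n := by
  induction n generalizing i i' with
  | zero => simp [awd, altProd_zero]
  | succ n ih => rw [show awd i i' (n + 1) = i :: awd i' i n from rfl, cs.wordProd_cons,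
      ih i' i, altProd_succ]

theorem alt_conj_shift {x y : W} (hx : x * x = 1) (hy : y * y = 1) {m₀ : ℕ}
    (hxy : (x * y) ^ m₀ = 1) (hyx : (y * x) ^ m₀ = 1) (L : ℕ) :
    (altProd x y (m₀ + L))⁻¹ * y * altProd x y (m₀ + L)
      = if Even m₀ then (altProd x y L)⁻¹ * y * altProd x y L
        else (altProd y x L)⁻¹ * x * altProd y x L := by
  have hg : (altProd x y m₀)⁻¹ * y * altProd x y m₀ = if Even m₀ then y else x :=
    alt_conj hy hx hyx
  rw [altProd_append x y m₀ L]
  by_cases hm : Even m₀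
  · rw [if_pos hm] at hg ⊢
    rw [if_pos hm, mul_inv_rev]
    calc (altProd x y L)⁻¹ * (altProd x y m₀)⁻¹ * y * (altProd x y m₀ * altProd x y L)
        = (altProd x y L)⁻¹ * ((altProd x y m₀)⁻¹ * y * altProd x y m₀) * altProd x y L := by
          group
      _ = (altProd x y L)⁻¹ * y * altProd x y L := by rw [hg]
  · rw [if_neg hm] at hg ⊢
    rw [if_neg hm, mul_inv_rev]
    calc (altProd y x L)⁻¹ * (altProd x y m₀)⁻¹ * y * (altProd x y m₀ * altProd y x L)
        = (altProd y x L)⁻¹ * ((altProd x y m₀)⁻¹ * y * altProd x y m₀) * altProd y x L := by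
          group
      _ = (altProd y x L)⁻¹ * x * altProd y x L := by rw [hg]

/-- The key permutation of `W × ZMod 2` associated to a simple reflection. -/
noncomputable def sigmaPerm (i : B) : Equiv.Perm (W × ZMod 2) :=
  Function.Involutive.toPerm
    (fun p => (cs.simple i * p.1 * cs.simple i, p.2 + if p.1 = cs.simple i then 1 else 0))
    (by
      rintro ⟨w, e⟩
      have hc : (cs.simple i * w * cs.simple i = cs.simple i) ↔ (w = cs.simple i) := by
        constructor
        · intro h
          have := congrArg (fun z => cs.simple i * z * cs.simple i) h
          simpa [mul_assoc, cs.simple_mul_simple_cancel_left,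
            cs.simple_mul_simple_self] using this
        · intro h
          rw [h, cs.simple_mul_simple_self, one_mul]
      refine Prod.ext ?_ ?_
      · simp [mul_assoc, cs.simple_mul_simple_cancel_left, cs.simple_mul_simple_self]
      · show e + _ + _ = e
        rw [if_congr hc rfl rfl]
        by_cases h : w = cs.simple i
        · rw [if_pos h, add_assoc, show (1 + 1 : ZMod 2) = 0 from rfl, add_zero]
        · rw [if_neg h, add_zero, add_zero])

theorem sigmaPerm_apply (i : B) (w : W) (e : ZMod 2) :
    (sigmaPerm cs i) (w, e) =
      (cs.simple i * w * cs.simple i, e + if w = cs.simple i then 1 else 0) := rfl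

theorem ris_cons (i : B) (ω : List B) :
    cs.rightInvSeq (i :: ω) =
      ((cs.wordProd ω)⁻¹ * cs.simple i * cs.wordProd ω) :: cs.rightInvSeq ω := rfl

theorem prodSigma_apply : ∀ (ω : List B) (w : W) (e : ZMod 2),
    ((ω.map (sigmaPerm cs)).prod) (w, e) =
      (cs.wordProd ω * w * (cs.wordProd ω)⁻¹,
        e + (cnt w (cs.rightInvSeq ω) : ZMod 2)) := by
  intro ω
  induction ω with
  | nil => intro w e; simp [cnt_nil]
  | cons i ω ih =>
    intro w e
    rw [List.map_cons, List.prod_cons, Equiv.Perm.mul_apply, ih, sigmaPerm_apply,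
      ris_cons, cnt_cons]
    have hiff : (cs.wordProd ω * w * (cs.wordProd ω)⁻¹ = cs.simple i)
        ↔ ((cs.wordProd ω)⁻¹ * cs.simple i * cs.wordProd ω = w) := by
      constructor
      · intro h; rw [← h]; group
      · intro h; rw [← h]; group
    have hfst : cs.simple i * (cs.wordProd ω * w * (cs.wordProd ω)⁻¹) * cs.simple i
        = cs.wordProd (i :: ω) * w * (cs.wordProd (i :: ω))⁻¹ := by
      rw [cs.wordProd_cons, mul_inv_rev, cs.inv_simple]
      group
    refine Prod.ext hfst ?_
    simp only
    push_cast
    by_cases h : (cs.wordProd ω)⁻¹ * cs.simple i * cs.wordProd ω = w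
    · rw [if_pos (hiff.mpr h), if_pos h]; ring
    · rw [if_neg (fun hh => h (hiff.mp hh)), if_neg h]; ring

theorem ris_awd_pair {i i' : B} {m₀ : ℕ}
    (hxy : (cs.simple i * cs.simple i') ^ m₀ = 1)
    (hyx : (cs.simple i' * cs.simple i) ^ m₀ = 1)
    {k : ℕ} (hk : k < m₀) :
    (cs.rightInvSeq (awd i i' (2 * m₀))).getD k 1 =
      (cs.rightInvSeq (awd i i' (2 * m₀))).getD (k + m₀) 1 := by
  have hx : cs.simple i * cs.simple i = 1 := cs.simple_mul_simple_self i
  have hy : cs.simple i' * cs.simple i' = 1 := cs.simple_mul_simple_self i'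
  set L := m₀ - (k + 1) with hL
  have e1 : 2 * m₀ - (k + 1) = m₀ + L := by omega
  have e2 : 2 * m₀ - (k + m₀ + 1) = L := by omega
  rw [cs.getD_rightInvSeq, cs.getD_rightInvSeq,
    awd_get? (show k < 2 * m₀ by omega) i i',
    awd_get? (show k + m₀ < 2 * m₀ by omega) i i',
    awd_drop (k + 1) (2 * m₀) i i', awd_drop (k + m₀ + 1) (2 * m₀) i i', e1, e2]
  rcases Nat.even_or_odd k with hke | hko
  · have c1 : ¬ Even (k + 1) := by simp [Nat.even_add_one, hke]
    rw [if_pos hke, if_neg c1, awd_wordProd]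
    simp only [Option.map_some, Option.getD_some]
    rw [alt_conj_shift hy hx hyx hxy L]
    rcases Nat.even_or_odd m₀ with hme | hmo
    · have c2 : Even (k + m₀) := hke.add hme
      have c3 : ¬ Even (k + m₀ + 1) := by simp [Nat.even_add_one, c2]
      rw [if_pos hme, if_pos c2, if_neg c3, awd_wordProd]
    · have c2 : ¬ Even (k + m₀) := by
        rw [Nat.even_add]
        simp [hke, Nat.not_even_iff_odd.mpr hmo]
      have c3 : Even (k + m₀ + 1) := by
        rw [Nat.even_add_one]; exact c2
      rw [if_neg (Nat.not_even_iff_odd.mpr hmo), if_neg c2, if_pos c3, awd_wordProd]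
  · have hkne : ¬ Even k := Nat.not_even_iff_odd.mpr hko
    have c1 : Even (k + 1) := by rw [Nat.even_add_one]; exact hkne
    rw [if_neg hkne, if_pos c1, awd_wordProd]
    simp only [Option.map_some, Option.getD_some]
    rw [alt_conj_shift hx hy hxy hyx L]
    rcases Nat.even_or_odd m₀ with hme | hmo
    · have c2 : ¬ Even (k + m₀) := by
        rw [Nat.even_add]
        simp [hkne, hme]
      have c3 : Even (k + m₀ + 1) := by rw [Nat.even_add_one]; exact c2
      rw [if_pos hme, if_neg c2, if_pos c3, awd_wordProd]
    · have c2 : Even (k + m₀) := by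
        rw [Nat.even_add]
        simp [hkne, Nat.not_even_iff_odd.mpr hmo]
      have c3 : ¬ Even (k + m₀ + 1) := by simp [Nat.even_add_one, c2]
      rw [if_neg (Nat.not_even_iff_odd.mpr hmo), if_pos c2, if_neg c3, awd_wordProd]

theorem sigma_liftable : M.IsLiftable (fun i => sigmaPerm cs i) := by
  intro i i'
  rcases Nat.eq_zero_or_pos (M i i') with h0 | hpos
  · rw [h0, pow_zero]
  · simp only
    have hword : ∀ m : ℕ,
        ((awd i i' (2 * m)).map (sigmaPerm cs)).prod = (sigmaPerm cs i * sigmaPerm cs i') ^ m := by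
      intro m
      induction m with
      | zero => simp [awd]
      | succ m ih =>
        have h2 : awd i i' (2 * (m + 1)) = i :: i' :: awd i i' (2 * m) := by
          rw [show 2 * (m + 1) = (2 * m + 1) + 1 by ring]; rfl
        rw [h2, List.map_cons, List.map_cons, List.prod_cons, List.prod_cons, ih, pow_succ',
          mul_assoc]
    rw [← hword (M i i')]
    apply Equiv.ext
    rintro ⟨w, e⟩
    rw [prodSigma_apply]
    have hπ : cs.wordProd (awd i i' (2 * M i i')) = 1 := by
      rw [awd_wordProd, altProd_two_mul]
      exact cs.simple_mul_simple_pow i i'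
    set l := cs.rightInvSeq (awd i i' (2 * M i i')) with hl
    have hlen : l.length = 2 * M i i' := by rw [hl, cs.length_rightInvSeq, awd_length]
    have hpair : ∀ k, k < M i i' → l.getD k 1 = l.getD (k + M i i') 1 := fun k hk =>
      ris_awd_pair cs (cs.simple_mul_simple_pow i i') (cs.simple_mul_simple_pow' i i') hk
    have htd : l.take (M i i') = l.drop (M i i') := by
      apply List.ext_getElem
      · rw [List.length_take, List.length_drop, hlen]; omega
      · intro k h1 h2
        have hk : k < M i i' := by
          rw [List.length_take, hlen] at h1; omega
        have hk1 : k < l.length := by omega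
        have hk2 : M i i' + k < l.length := by omega
        rw [List.getElem_take, List.getElem_drop]
        rw [← List.getD_eq_getElem l 1 hk1, ← List.getD_eq_getElem l 1 hk2,
          show M i i' + k = k + M i i' by ring]
        exact hpair k hk
    have hcnt : cnt w l = cnt w (l.take (M i i')) + cnt w (l.take (M i i')) := by
      conv_lhs => rw [← List.take_append_drop (M i i') l]
      rw [cnt_append, htd]
    refine Prod.ext ?_ ?_
    · show cs.wordProd _ * w * _⁻¹ = w
      rw [hπ]; group
    · show e + (cnt w l : ZMod 2) = e
      rw [hcnt]
      push_cast
      ring_nf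
      rw [show (2 : ZMod 2) = 0 by rfl, mul_zero, add_zero]

/-- The reflection representation on `W × ZMod 2`. -/
noncomputable def phiRep : W →* Equiv.Perm (W × ZMod 2) :=
  cs.lift ⟨fun i => sigmaPerm cs i, sigma_liftable cs⟩

theorem phiRep_simple (i : B) : phiRep cs (cs.simple i) = sigmaPerm cs i :=
  cs.lift_apply_simple (sigma_liftable cs) i

theorem phiRep_wordProd (ω : List B) :
    phiRep cs (cs.wordProd ω) = (ω.map (sigmaPerm cs)).prod := by
  induction ω with
  | nil => simp
  | cons i ω ih =>
    rw [cs.wordProd_cons, map_mul, phiRep_simple, List.map_cons, List.prod_cons, ih]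

/-- The mod-2 count of a reflection among right inversions. -/
noncomputable def Nf (u w : W) : ZMod 2 := (phiRep cs u (w, 0)).2

theorem Nf_wordProd (ω : List B) (w : W) :
    Nf cs (cs.wordProd ω) w = (cnt w (cs.rightInvSeq ω) : ZMod 2) := by
  rw [Nf, phiRep_wordProd, prodSigma_apply, zero_add]

theorem phiRep_apply (u w : W) (e : ZMod 2) :
    phiRep cs u (w, e) = (u * w * u⁻¹, e + Nf cs u w) := by
  obtain ⟨ω, rfl⟩ := cs.wordProd_surjective u
  rw [phiRep_wordProd, prodSigma_apply, Nf_wordProd]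

theorem Nf_mul (u v w : W) : Nf cs (u * v) w = Nf cs v w + Nf cs u (v * w * v⁻¹) := by
  show (phiRep cs (u * v) (w, 0)).2 = _
  rw [map_mul, Equiv.Perm.mul_apply, phiRep_apply cs v w 0, phiRep_apply cs u (v * w * v⁻¹),
    Nf]
  simp

theorem Nf_simple (i : B) (w : W) :
    Nf cs (cs.simple i) w = if w = cs.simple i then 1 else 0 := by
  show (phiRep cs (cs.simple i) (w, 0)).2 = _
  rw [phiRep_simple, sigmaPerm_apply]
  simp

theorem length_mul_lt_of_Nf_one {u w : W} (h : Nf cs u w = 1) :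
    cs.length (u * w) < cs.length u := by
  obtain ⟨ω, hred, rfl⟩ := cs.exists_reduced_word' u
  rw [Nf_wordProd] at h
  have hcnt : cnt w (cs.rightInvSeq ω) ≠ 0 := by
    intro h0
    rw [h0] at h
    simp at h
  obtain ⟨j, hj, hw⟩ := List.mem_iff_getElem.mp (mem_of_cnt_ne_zero hcnt)
  have hj' : j < ω.length := by rw [cs.length_rightInvSeq] at hj; exact hj
  have hgd : (cs.rightInvSeq ω).getD j 1 = w := by rw [List.getD_eq_getElem _ 1 hj, hw]
  have hkey := cs.wordProd_mul_getD_rightInvSeq ω j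
  rw [hgd] at hkey
  rw [hkey]
  calc cs.length (cs.wordProd (ω.eraseIdx j)) ≤ (ω.eraseIdx j).length :=
        cs.length_wordProd_le _
  _ < ω.length := by have := List.length_eraseIdx_add_one hj'; omega
  _ = cs.length (cs.wordProd ω) := hred.symm

theorem Nf_refl : ∀ (u : W), ∀ (i : B),
    Nf cs (u * cs.simple i * u⁻¹) (u * cs.simple i * u⁻¹) = 1 := by
  intro u
  induction u using cs.simple_induction_left with
  | one =>
    intro i
    simp [Nf_simple]
  | mul_simple_left w j ih =>
    intro i
    set t' := w * cs.simple i * w⁻¹ with ht'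
    have hre : (cs.simple j * w) * cs.simple i * (cs.simple j * w)⁻¹
        = (cs.simple j * t') * cs.simple j := by
      rw [mul_inv_rev, cs.inv_simple, ht']
      group
    rw [hre]
    set X := (cs.simple j * t') * cs.simple j with hX
    have ht2 : t' * t' = 1 := by
      calc t' * t' = w * (cs.simple i * cs.simple i) * w⁻¹ := by rw [ht']; group
      _ = 1 := by rw [cs.simple_mul_simple_self]; group
    have ht2' : t'⁻¹ = t' := inv_eq_of_mul_eq_one_right ht2
    have e1 : Nf cs X X = Nf cs (cs.simple j) X + Nf cs (cs.simple j * t')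
        (cs.simple j * X * (cs.simple j)⁻¹) := Nf_mul cs _ _ _
    have e2 : cs.simple j * X * (cs.simple j)⁻¹ = t' := by
      rw [hX, cs.inv_simple]
      simp [mul_assoc, cs.simple_mul_simple_cancel_left, cs.simple_mul_simple_self]
    have e3 : Nf cs (cs.simple j * t') t' = Nf cs t' t' + Nf cs (cs.simple j)
        (t' * t' * t'⁻¹) := Nf_mul cs _ _ _
    have e4 : t' * t' * t'⁻¹ = t' := by rw [ht2, one_mul, ht2']
    have e5 : Nf cs t' t' = 1 := ih i
    have hiff : (X = cs.simple j) ↔ (t' = cs.simple j) := by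
      constructor
      · intro h
        have : t' = cs.simple j * X * cs.simple j := by
          rw [hX]
          simp [mul_assoc, cs.simple_mul_simple_cancel_left, cs.simple_mul_simple_self]
        rw [this, h, cs.simple_mul_simple_self, one_mul]
      · intro h
        rw [hX, h, cs.simple_mul_simple_self, one_mul]
    rw [e1, e2, e3, e4, e5, Nf_simple, Nf_simple]
    by_cases h : t' = cs.simple j
    · rw [if_pos h, if_pos (hiff.mpr h)]
      decide
    · rw [if_neg h, if_neg (fun hh => h (hiff.mp hh))]
      decide

theorem Nf_one_of_reflection_lt {u t : W} (ht : cs.IsReflection t)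
    (h : cs.length (u * t) < cs.length u) : Nf cs u t = 1 := by
  by_contra h0
  have h00 : Nf cs u t = 0 := by
    have hz : ∀ z : ZMod 2, z = 0 ∨ z = 1 := by decide
    rcases hz (Nf cs u t) with hz' | hz'
    · exact hz'
    · exact absurd hz' h0
  have htt : Nf cs t t = 1 := by
    obtain ⟨w, i, rfl⟩ := ht
    exact Nf_refl cs w i
  have key : Nf cs (u * t) t = 1 := by
    rw [Nf_mul cs u t t, show t * t * t⁻¹ = t by rw [ht.mul_self, one_mul, ht.inv], htt, h00,
      add_zero]
  have hlt := length_mul_lt_of_Nf_one cs key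
  rw [mul_assoc, ht.mul_self, mul_one] at hlt
  omega

end Cocycle

section Final

open List CoxeterSystem

variable {B W : Type*} [Group W] {M : CoxeterMatrix B} (cs : CoxeterSystem M W)

theorem exists_prefix_decomp {rI : W} (hmax : ∀ u : W, cs.length u ≤ cs.length rI) :
    ∀ v : W, ∃ u : W, rI = v * u ∧ cs.length rI = cs.length v + cs.length u := by
  suffices h : ∀ (n : ℕ) (v : W), cs.length v = n →
      ∃ u, rI = v * u ∧ cs.length rI = cs.length v + cs.length u by
    intro v; exact h _ v rfl
  intro n
  induction n using Nat.strong_induction_on with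
  | _ n ih =>
    intro v hv
    rcases eq_or_ne v 1 with rfl | hne
    · exact ⟨rI, by rw [one_mul], by simp⟩
    · obtain ⟨i, hi⟩ := cs.exists_rightDescent_of_ne_one hne
      have hi' : cs.length (v * cs.simple i) + 1 = cs.length v := cs.isRightDescent_iff.mp hi
      obtain ⟨u₂, hdec, hlen⟩ := ih (cs.length (v * cs.simple i)) (by omega) (v * cs.simple i) rfl
      set v₂ := v * cs.simple i with hv₂
      by_cases hsu : cs.length (cs.simple i * u₂) < cs.length u₂
      · refine ⟨cs.simple i * u₂, ?_, ?_⟩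
        · rw [hdec, hv₂, mul_assoc]
        · have hd := cs.length_simple_mul u₂ i
          have hq : cs.length (v * (cs.simple i * u₂)) = cs.length rI := by
            rw [← mul_assoc, ← hv₂, ← hdec]
          omega
      · exfalso
        have hsu' : cs.length (cs.simple i * u₂) = cs.length u₂ + 1 :=
          (cs.length_simple_mul u₂ i).resolve_right (by omega)
        set t := v₂ * cs.simple i * v₂⁻¹ with htdef
        have ht : cs.IsReflection t := ⟨v₂, i, rfl⟩
        have hz2 : ∀ z : ZMod 2, z = 0 ∨ z = 1 := by decide
        have hN1 : Nf cs v₂⁻¹ t = 0 := by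
          rcases hz2 (Nf cs v₂⁻¹ t) with h | h
          · exact h
          · exfalso
            have hlt := length_mul_lt_of_Nf_one cs h
            have he : v₂⁻¹ * t = cs.simple i * v₂⁻¹ := by rw [htdef]; group
            have he2 : cs.length (cs.simple i * v₂⁻¹) = cs.length v := by
              rw [← cs.length_inv, mul_inv_rev, inv_inv, cs.inv_simple, hv₂,
                cs.simple_mul_simple_cancel_right]
            rw [he, he2, cs.length_inv] at hlt
            omega
        have hN2 : Nf cs u₂⁻¹ (cs.simple i) = 0 := by
          rcases hz2 (Nf cs u₂⁻¹ (cs.simple i)) with h | h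
          · exact h
          · exfalso
            have hlt := length_mul_lt_of_Nf_one cs h
            have he : cs.length (u₂⁻¹ * cs.simple i) = cs.length (cs.simple i * u₂) := by
              rw [← cs.length_inv, mul_inv_rev, inv_inv, cs.inv_simple]
            rw [he, cs.length_inv] at hlt
            omega
        have hcoc : Nf cs rI⁻¹ t = 0 := by
          have hrIinv : rI⁻¹ = u₂⁻¹ * v₂⁻¹ := by rw [hdec, mul_inv_rev]
          have hconj : v₂⁻¹ * t * v₂⁻¹⁻¹ = cs.simple i := by rw [htdef]; group
          rw [hrIinv, Nf_mul, hconj, hN1, hN2, add_zero]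
        have hne0 : cs.length (rI⁻¹ * t) ≠ cs.length rI⁻¹ := ht.length_mul_left_ne rI⁻¹
        have hgt : ¬ cs.length (rI⁻¹ * t) < cs.length rI⁻¹ := by
          intro hlt
          have h1 := Nf_one_of_reflection_lt cs ht hlt
          rw [h1] at hcoc
          exact one_ne_zero hcoc
        have hmax' := hmax (rI⁻¹ * t)
        rw [cs.length_inv] at hne0 hgt
        omega

theorem eq_longest_of_all_rightDescents {rI w : W}
    (hmax : ∀ u : W, cs.length u ≤ cs.length rI)
    (hw : ∀ i : B, cs.length (w * cs.simple i) < cs.length w) : w = rI := by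
  obtain ⟨u, hdec, hlen⟩ := exists_prefix_decomp cs hmax w
  rcases eq_or_ne u 1 with rfl | hne
  · rw [hdec, mul_one]
  · exfalso
    obtain ⟨i, hi⟩ := cs.exists_leftDescent_of_ne_one hne
    have hi' : cs.length (cs.simple i * u) + 1 = cs.length u := cs.isLeftDescent_iff.mp hi
    have hre : rI = (w * cs.simple i) * (cs.simple i * u) := by
      rw [hdec, mul_assoc, cs.simple_mul_simple_cancel_left]
    have h1 := cs.length_mul_le (w * cs.simple i) (cs.simple i * u)
    rw [← hre] at h1
    have h2 := hw i
    omega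

end Final

/-- In a finite Coxeter group, if both alternating words of `m = |r_α r_β|` letters in a
2-partition `{α, β}` are compatible, then `∏_m(r_α,r_β) = ∏_m(r_β,r_α) = r_I`. -/
theorem altProd_eq_longest_of_compatible {B W : Type*} [Group W] {M : CoxeterMatrix B}
    (cs : CoxeterSystem M W) [Finite W]
    (α β : Set B) (hunion : α ∪ β = Set.univ) (hdisj : Disjoint α β)
    (hα : α.Nonempty) (hβ : β.Nonempty)
    (rα rβ rI : W) (hrα : IsLongestOf cs α rα) (hrβ : IsLongestOf cs β rβ)
    (hrI : IsLongestOf cs Set.univ rI)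
    (h1 : cs.length (altProd rα rβ (orderOf (rα * rβ))) =
      altSum (cs.length rα) (cs.length rβ) (orderOf (rα * rβ)))
    (h2 : cs.length (altProd rβ rα (orderOf (rα * rβ))) =
      altSum (cs.length rβ) (cs.length rα) (orderOf (rα * rβ))) :
    altProd rα rβ (orderOf (rα * rβ)) = rI ∧
      altProd rβ rα (orderOf (rα * rβ)) = rI := by
  have hpow : (rα * rβ) ^ orderOf (rα * rβ) = 1 := pow_orderOf_eq_one _
  obtain ⟨n, hmn⟩ : ∃ n, orderOf (rα * rβ) = n + 1 :=
    ⟨orderOf (rα * rβ) - 1, by have := orderOf_pos (rα * rβ); omega⟩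
  rw [hmn] at h1 h2 hpow ⊢
  have hxx : rα * rα = 1 := hrα.mul_self cs
  have hyy : rβ * rβ = 1 := hrβ.mul_self cs
  have hxi : rα⁻¹ = rα := hrα.inv_eq cs
  have hyi : rβ⁻¹ = rβ := hrβ.inv_eq cs
  have hpow' : (rβ * rα) ^ (n + 1) = 1 := by
    have : rβ * rα = (rα * rβ)⁻¹ := by rw [mul_inv_rev, hxi, hyi]
    rw [this, inv_pow, hpow, inv_one]
  set p := altProd rα rβ (n + 1) with hp
  set q := altProd rβ rα (n + 1) with hq
  have hpq : p * q = 1 := alt_mul_alt hxx hyy hpow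
  have hqp : q * p = 1 := alt_mul_alt hyy hxx hpow'
  have hqinv : q = p⁻¹ := (inv_eq_of_mul_eq_one_right hpq).symm
  have hpinv : p = q⁻¹ := (inv_eq_of_mul_eq_one_left hpq).symm
  have hlq : cs.length q = cs.length p := by rw [hqinv, cs.length_inv]
  have hmax : ∀ u : W, cs.length u ≤ cs.length rI := hrI.length_le_univ cs
  -- first-factor decompositions
  obtain ⟨hfp1, hfp2⟩ := length_altProd_first cs h1
  obtain ⟨hfq1, hfq2⟩ := length_altProd_first cs h2
  -- last-factor decompositions
  obtain ⟨wp, hlp1, hlp2⟩ := length_altProd_last cs n rα rβ h1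
  obtain ⟨wq, hlq1, hlq2⟩ := length_altProd_last cs n rβ rα h2
  rw [← hp] at hfp1 hlp1 hlp2
  rw [← hq] at hfq1 hlq1 hlq2
  -- if n is odd (i.e. m even), then p = q
  have hpq_eq : ¬ Even n → p = q := by
    intro hodd
    obtain ⟨k, hk⟩ : ∃ k, n + 1 = 2 * k := by
      rcases Nat.even_or_odd n with he | ho
      · exact absurd he hodd
      · obtain ⟨k, hk⟩ := ho; exact ⟨k + 1, by omega⟩
    have hpk : p = (rα * rβ) ^ k := by rw [hp, hk, altProd_two_mul]
    have hpp : p * p = 1 := by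
      rw [hpk, ← pow_add]
      rw [show k + k = n + 1 by omega, hpow]
    rw [hqinv, inv_eq_of_mul_eq_one_right hpp]
  have hmem : ∀ i : B, i ∈ α ∨ i ∈ β := by
    intro i
    have : i ∈ α ∪ β := by rw [hunion]; trivial
    exact this
  -- all right descents of p
  have hdp : ∀ i : B, cs.length (p * cs.simple i) < cs.length p := by
    intro i
    rcases hmem i with hiα | hiβ
    · rcases Nat.even_or_odd n with he | ho
      · -- last factor of p is rα
        rw [if_pos he] at hlp1 hlp2
        calc cs.length (p * cs.simple i) ≤ cs.length wp + cs.length (rα * cs.simple i) := by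
              rw [hlp1, mul_assoc]; exact cs.length_mul_le _ _
        _ < cs.length wp + cs.length rα := by
              have := hrα.length_mul_simple_lt cs hiα; omega
        _ = cs.length p := hlp2.symm
      · -- p = q, last factor of q is rα
        have hpe := hpq_eq (Nat.not_even_iff_odd.mpr ho)
        rw [if_neg (Nat.not_even_iff_odd.mpr ho)] at hlq1 hlq2
        rw [hpe]
        calc cs.length (q * cs.simple i) ≤ cs.length wq + cs.length (rα * cs.simple i) := by
              rw [hlq1, mul_assoc]; exact cs.length_mul_le _ _
        _ < cs.length wq + cs.length rα := by
              have := hrα.length_mul_simple_lt cs hiα; omega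
        _ = cs.length q := hlq2.symm
    · -- i ∈ β : use first factor of q and inverses
      have he : cs.length (p * cs.simple i) = cs.length (cs.simple i * q) := by
        rw [hqinv, ← cs.length_inv (p * cs.simple i), mul_inv_rev, cs.inv_simple]
      rw [he]
      have hq' : q = rβ * altProd rα rβ n := by rw [hq, altProd_succ]
      calc cs.length (cs.simple i * q)
          ≤ cs.length (cs.simple i * rβ) + cs.length (altProd rα rβ n) := by
            rw [hq', ← mul_assoc]; exact cs.length_mul_le _ _
      _ < cs.length rβ + cs.length (altProd rα rβ n) := by
            have := hrβ.length_simple_mul_lt cs hiβ; omega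
      _ = cs.length q := hfq1.symm
      _ = cs.length p := hlq
  -- all right descents of q
  have hdq : ∀ i : B, cs.length (q * cs.simple i) < cs.length q := by
    intro i
    rcases hmem i with hiα | hiβ
    · -- i ∈ α : use first factor of p and inverses
      have he : cs.length (q * cs.simple i) = cs.length (cs.simple i * p) := by
        rw [hpinv, ← cs.length_inv (q * cs.simple i), mul_inv_rev, cs.inv_simple]
      rw [he]
      have hp' : p = rα * altProd rβ rα n := by rw [hp, altProd_succ]
      calc cs.length (cs.simple i * p)
          ≤ cs.length (cs.simple i * rα) + cs.length (altProd rβ rα n) := by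
            rw [hp', ← mul_assoc]; exact cs.length_mul_le _ _
      _ < cs.length rα + cs.length (altProd rβ rα n) := by
            have := hrα.length_simple_mul_lt cs hiα; omega
      _ = cs.length p := hfp1.symm
      _ = cs.length q := hlq.symm
    · rcases Nat.even_or_odd n with he | ho
      · -- last factor of q is rβ
        rw [if_pos he] at hlq1 hlq2
        calc cs.length (q * cs.simple i) ≤ cs.length wq + cs.length (rβ * cs.simple i) := by
              rw [hlq1, mul_assoc]; exact cs.length_mul_le _ _
        _ < cs.length wq + cs.length rβ := by
              have := hrβ.length_mul_simple_lt cs hiβ; omega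
        _ = cs.length q := hlq2.symm
      · -- q = p, last factor of p is rβ
        have hpe := hpq_eq (Nat.not_even_iff_odd.mpr ho)
        rw [if_neg (Nat.not_even_iff_odd.mpr ho)] at hlp1 hlp2
        rw [← hpe]
        calc cs.length (p * cs.simple i) ≤ cs.length wp + cs.length (rβ * cs.simple i) := by
              rw [hlp1, mul_assoc]; exact cs.length_mul_le _ _
        _ < cs.length wp + cs.length rβ := by
              have := hrβ.length_mul_simple_lt cs hiβ; omega
        _ = cs.length p := hlp2.symm
  exact ⟨eq_longest_of_all_rightDescents cs hmax hdp,
    eq_longest_of_all_rightDescents cs hmax hdq⟩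
end

section
/- Let (W,S) be a Coxeter system indexed by I and let {α,β} be a spherical 2-partition of I that is admissible, meaning: for every w in the subgroup generated by r_α and r_β and every γ ∈ {α,β}, either γ ⊆ I^+(w) or γ ⊆ I^-(w). Then every element w of ⟨r_α, r_β⟩ admits a compatible representation on {α,β}, i.e. w = r_{α_1}···r_{α_n} with each α_k ∈ {α,β} and ℓ(w) = Σ_{k=1}^n ℓ(r_{α_k}). -/
/-- `α` is spherical: the standard parabolic subgroup it generates is finite. -/
def IsSpherical {B W : Type*} [Group W] {M : CoxeterMatrix B} (cs : CoxeterSystem M W)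
    (α : Set B) : Prop :=
  Set.Finite ((Subgroup.closure (cs.simple '' α) : Subgroup W) : Set W)

namespace ExchAux

open CoxeterSystem List

attribute [local instance] Classical.propDecidable

variable {B W : Type*} [Group W] {M : CoxeterMatrix B} (cs : CoxeterSystem M W)

local prefix:100 "s" => cs.simple
local prefix:100 "π" => cs.wordProd
local prefix:100 "ℓ" => cs.length
local prefix:100 "ris" => cs.rightInvSeq
local prefix:100 "lis" => cs.leftInvSeq

/-! ### The sign permutation representation and strong exchange -/

lemma zmod2_cancel {a b : ZMod 2} (h : a + b = 0) : b = a := by revert a b; decide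

lemma zmod2_aba {a : ZMod 2} : a + 1 + a = 1 := by revert a; decide

noncomputable def permAux (i : B) : W × ZMod 2 → W × ZMod 2 :=
  fun p => (s i * p.1 * s i, p.2 + if p.1 = s i then 1 else 0)

lemma simple_conj_eq_iff (i : B) (x y : W) : s i * x * s i = y ↔ x = s i * y * s i := by
  constructor
  · rintro rfl; simp [mul_assoc]
  · rintro rfl; simp [mul_assoc]

lemma permAux_invol (i : B) (p : W × ZMod 2) : permAux cs i (permAux cs i p) = p := by
  obtain ⟨t, ε⟩ := p
  unfold permAux
  refine Prod.ext ?_ ?_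
  · simp [mul_assoc]
  · have h : (s i * t * s i = s i) ↔ (t = s i) := by
      rw [simple_conj_eq_iff]; simp
    simp only [h]
    rw [add_assoc, CharTwo.add_self_eq_zero, add_zero]

noncomputable def perm (i : B) : Equiv.Perm (W × ZMod 2) :=
  ⟨permAux cs i, permAux cs i, permAux_invol cs i, permAux_invol cs i⟩

lemma perm_apply (i : B) (t : W) (ε : ZMod 2) :
    perm cs i (t, ε) = (s i * t * s i, ε + if t = s i then 1 else 0) := rfl

lemma sj_mul_pow (i j : B) (k : ℕ) : s j * (s i * s j) ^ k = (s j * s i) ^ k * s j := by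
  induction k with
  | zero => simp
  | succ k ih =>
      rw [pow_succ', pow_succ', ← mul_assoc, ← mul_assoc, mul_assoc (s j * s i), ih,
        ← mul_assoc]

lemma perm_pow_apply (i j : B) (k : ℕ) (t : W) (ε : ZMod 2) :
    ((perm cs i * perm cs j) ^ k) (t, ε) =
      ((s i * s j) ^ k * t * (s j * s i) ^ k,
        ε + ∑ l ∈ Finset.range (2 * k), if t = (s j * s i) ^ l * s j then 1 else 0) := by
  induction k generalizing t ε with
  | zero => simp
  | succ k ih =>
      rw [pow_succ, Equiv.Perm.mul_apply, Equiv.Perm.mul_apply, perm_apply]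
      rw [perm_apply, ih]
      have h0 : (t = s j) ↔ (t = (s j * s i) ^ 0 * s j) := by rw [pow_zero, one_mul]
      have h1 : (s j * t * s j = s i) ↔ (t = (s j * s i) ^ 1 * s j) := by
        rw [simple_conj_eq_iff, pow_one]
      have hstep : ∀ l : ℕ, (s i * (s j * t * s j) * s i = (s j * s i) ^ l * s j)
          ↔ (t = (s j * s i) ^ (l + 2) * s j) := by
        intro l
        rw [simple_conj_eq_iff, simple_conj_eq_iff]
        have heq : s j * (s i * ((s j * s i) ^ l * s j) * s i) * s j
            = (s j * s i) ^ (l + 2) * s j := by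
          have e1 : (s j * s i) ^ (l + 2) = (s j * s i) * (s j * s i) ^ l * (s j * s i) := by
            rw [show l + 2 = 1 + l + 1 by omega, pow_succ, pow_add, pow_one]
          rw [e1]; simp [mul_assoc]
        rw [heq]
      refine Prod.ext ?_ ?_
      · show (s i * s j) ^ k * (s i * (s j * t * s j) * s i) * (s j * s i) ^ k
            = (s i * s j) ^ (k + 1) * t * (s j * s i) ^ (k + 1)
        rw [pow_succ (s i * s j), pow_succ' (s j * s i)]
        simp [mul_assoc]
      · show ε + (if t = s j then (1 : ZMod 2) else 0)
            + (if s j * t * s j = s i then (1 : ZMod 2) else 0)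
            + ∑ l ∈ Finset.range (2 * k),
                (if s i * (s j * t * s j) * s i = (s j * s i) ^ l * s j then (1 : ZMod 2) else 0)
            = ε + ∑ l ∈ Finset.range (2 * (k + 1)),
                (if t = (s j * s i) ^ l * s j then (1 : ZMod 2) else 0)
        simp only [h0, h1, hstep]
        rw [show 2 * (k + 1) = (2 * k + 1) + 1 by omega]
        rw [Finset.sum_range_succ' (fun l => if t = (s j * s i) ^ l * s j then (1 : ZMod 2) else 0)]
        rw [Finset.sum_range_succ' (fun l => if t = (s j * s i) ^ (l + 1) * s j then (1 : ZMod 2) else 0)]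
        have : ∀ l : ℕ, l + 1 + 1 = l + 2 := fun l => by omega
        simp only [this, zero_add]
        ring

lemma perm_liftable : M.IsLiftable (perm cs) := by
  intro i j
  refine Equiv.ext fun p => ?_
  obtain ⟨t, ε⟩ := p
  rw [perm_pow_apply]
  have h1 : (s i * s j) ^ M i j = 1 := cs.simple_mul_simple_pow i j
  have h2 : (s j * s i) ^ M i j = 1 := by
    rw [M.symmetric i j]; exact cs.simple_mul_simple_pow j i
  have hsum : ∑ l ∈ Finset.range (2 * M i j),
      (if t = (s j * s i) ^ l * s j then (1 : ZMod 2) else 0) = 0 := by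
    rw [two_mul, Finset.sum_range_add]
    have : ∀ l : ℕ, (s j * s i) ^ (M i j + l) = (s j * s i) ^ l := by
      intro l; rw [pow_add, h2, one_mul]
    simp only [this]
    exact CharTwo.add_self_eq_zero _
  rw [h1, h2, hsum, one_mul, mul_one, add_zero]
  rfl

noncomputable def sgn : W →* Equiv.Perm (W × ZMod 2) := cs.lift ⟨perm cs, perm_liftable cs⟩

lemma sgn_simple (i : B) : sgn cs (s i) = perm cs i := cs.lift_apply_simple (perm_liftable cs) i

/-- Indicator sum: the parity of the number of occurrences of `t` in `l`. -/
noncomputable def indSum (l : List W) (t : W) : ZMod 2 := (l.map fun x => if x = t then (1 : ZMod 2) else 0).sum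

lemma indSum_eq_zero {l : List W} {t : W} (h : t ∉ l) : indSum l t = 0 := by
  apply List.sum_eq_zero
  intro x hx
  obtain ⟨y, hy, rfl⟩ := List.mem_map.mp hx
  have : y ≠ t := fun hyt => h (hyt ▸ hy)
  simp [this]

lemma mem_of_indSum_ne_zero {l : List W} {t : W} (h : indSum l t ≠ 0) : t ∈ l := by
  by_contra hmem
  exact h (indSum_eq_zero hmem)

lemma sgn_wordProd (ω : List B) (t : W) (ε : ZMod 2) :
    sgn cs (π ω) (t, ε) = (π ω * t * (π ω)⁻¹, ε + indSum (ris ω) t) := by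
  induction ω generalizing t ε with
  | nil => simp [indSum]
  | cons i ω ih =>
      rw [cs.wordProd_cons, map_mul, Equiv.Perm.mul_apply, ih, sgn_simple, perm_apply]
      refine Prod.ext ?_ ?_
      · show s i * (π ω * t * (π ω)⁻¹) * s i = π (i :: ω) * t * (π (i :: ω))⁻¹
        rw [cs.wordProd_cons, mul_inv_rev, cs.inv_simple]
        simp [mul_assoc]
      · show ε + indSum (ris ω) t + (if π ω * t * (π ω)⁻¹ = s i then (1 : ZMod 2) else 0)
            = ε + indSum (ris (i :: ω)) t
        have hris : ris (i :: ω) = ((π ω)⁻¹ * s i * π ω) :: ris ω := rfl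
        have hcond : (π ω * t * (π ω)⁻¹ = s i) ↔ ((π ω)⁻¹ * s i * π ω = t) := by
          constructor
          · intro h; rw [← h]; simp [mul_assoc]
          · intro h; rw [← h]; simp [mul_assoc]
        rw [hris]
        show ε + indSum (ris ω) t + _ = ε + ((if (π ω)⁻¹ * s i * π ω = t then (1 : ZMod 2) else 0)
            + indSum (ris ω) t)
        simp only [hcond]
        ring

/-- The parity cocycle. -/
noncomputable def nn (w t : W) : ZMod 2 := (sgn cs w (t, 0)).2

lemma nn_wordProd (ω : List B) (t : W) : nn cs (π ω) t = indSum (ris ω) t := by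
  unfold nn; rw [sgn_wordProd]; simp

lemma sgn_apply (w t : W) (ε : ZMod 2) :
    sgn cs w (t, ε) = (w * t * w⁻¹, ε + nn cs w t) := by
  obtain ⟨ω, rfl⟩ := cs.wordProd_surjective w
  rw [sgn_wordProd, nn_wordProd]

lemma nn_mul (u v t : W) : nn cs (u * v) t = nn cs v t + nn cs u (v * t * v⁻¹) := by
  unfold nn
  rw [map_mul, Equiv.Perm.mul_apply, sgn_apply, sgn_apply, sgn_apply]
  simp

lemma nn_one (t : W) : nn cs 1 t = 0 := by unfold nn; simp

lemma nn_inv (x t : W) : nn cs x⁻¹ (x * t * x⁻¹) = nn cs x t := by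
  apply zmod2_cancel
  have := nn_mul cs x⁻¹ x t
  rw [inv_mul_cancel, nn_one] at this
  exact this.symm

lemma nn_simple_self (i : B) : nn cs (s i) (s i) = 1 := by
  unfold nn
  rw [sgn_simple, perm_apply]
  simp

lemma nn_reflection {t : W} (ht : cs.IsReflection t) : nn cs t t = 1 := by
  obtain ⟨x, k, rfl⟩ := ht
  have e1 : x * s k * x⁻¹ = x * (s k * x⁻¹) := by rw [mul_assoc]
  rw [e1, nn_mul]
  have e2 : s k * x⁻¹ * (x * (s k * x⁻¹)) * (s k * x⁻¹)⁻¹ = s k := by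
    rw [mul_inv_rev, inv_inv, cs.inv_simple]
    simp [mul_assoc]
  rw [e2]
  have e3 : nn cs (s k * x⁻¹) (x * (s k * x⁻¹)) = nn cs x⁻¹ (x * (s k * x⁻¹)) + 1 := by
    rw [nn_mul]
    have e4 : x⁻¹ * (x * (s k * x⁻¹)) * x⁻¹⁻¹ = s k := by simp [mul_assoc]
    rw [e4, nn_simple_self]
  rw [e3]
  have e5 : nn cs x⁻¹ (x * (s k * x⁻¹)) = nn cs x (s k) := by
    rw [← e1]; exact nn_inv cs x (s k)
  rw [e5]
  exact zmod2_aba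

lemma mem_rightInvSeq_of_inversion {ω : List B} (hω : cs.IsReduced ω) {t : W}
    (ht : cs.IsReflection t) (h : ℓ (π ω * t) < ℓ (π ω)) : t ∈ ris ω := by
  by_contra hmem
  have h0 : nn cs (π ω) t = 0 := by rw [nn_wordProd, indSum_eq_zero hmem]
  have h1 : nn cs (π ω * t) t = 1 := by
    have key := nn_mul cs (π ω * t) t t
    have harg : t * t * t⁻¹ = t := by rw [ht.mul_self, one_mul, ht.inv]
    rw [harg] at key
    have hprod : (π ω * t) * t = π ω := by rw [mul_assoc, ht.mul_self, mul_one]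
    rw [hprod] at key
    rw [h0, nn_reflection cs ht] at key
    exact zmod2_cancel key.symm
  obtain ⟨σ, hσred, hσ⟩ := cs.exists_reduced_word' (π ω * t)
  rw [hσ] at h1
  rw [nn_wordProd] at h1
  have hmemσ : t ∈ ris σ := mem_of_indSum_ne_zero (h1 ▸ one_ne_zero)
  have hinv := (cs.isRightInversion_of_mem_rightInvSeq hσred hmemσ).2
  rw [← hσ, mul_assoc, ht.mul_self, mul_one] at hinv
  omega

lemma right_exchange {ω : List B} (hω : cs.IsReduced ω) {t : W}
    (ht : cs.IsReflection t) (h : ℓ (π ω * t) < ℓ (π ω)) :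
    ∃ j < ω.length, π ω * t = π (ω.eraseIdx j) := by
  have hmem := mem_rightInvSeq_of_inversion cs hω ht h
  obtain ⟨j, hj, hjt⟩ := List.mem_iff_getElem.mp hmem
  rw [cs.length_rightInvSeq] at hj
  refine ⟨j, hj, ?_⟩
  have : (ris ω).getD j 1 = t := by
    rw [List.getD_eq_getElem _ 1 (by rw [cs.length_rightInvSeq]; exact hj)]
    exact hjt
  rw [← this, cs.wordProd_mul_getD_rightInvSeq]

lemma left_exchange {ω : List B} (hω : cs.IsReduced ω) {i : B}
    (h : ℓ (s i * π ω) < ℓ (π ω)) :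
    ∃ j < ω.length, s i * π ω = π (ω.eraseIdx j) := by
  have hrev : cs.IsReduced ω.reverse := (cs.isReduced_reverse_iff ω).mpr hω
  have hdesc : ℓ (π ω.reverse * s i) < ℓ (π ω.reverse) := by
    rw [cs.wordProd_reverse]
    have e : (π ω)⁻¹ * s i = (s i * π ω)⁻¹ := by
      rw [mul_inv_rev, cs.inv_simple]
    rw [e, cs.length_inv, cs.length_inv]
    exact h
  have hmem := mem_rightInvSeq_of_inversion cs hrev (cs.isReflection_simple i) hdesc
  rw [cs.rightInvSeq_reverse, List.mem_reverse] at hmem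
  obtain ⟨j, hj, hjt⟩ := List.mem_iff_getElem.mp hmem
  rw [cs.length_leftInvSeq] at hj
  refine ⟨j, hj, ?_⟩
  have : (lis ω).getD j 1 = s i := by
    rw [List.getD_eq_getElem _ 1 (by rw [cs.length_leftInvSeq]; exact hj)]
    exact hjt
  rw [← this, cs.getD_leftInvSeq_mul_wordProd]

/-! ### Words over a subset -/

def Over (γ : Set B) (ω : List B) : Prop := ∀ i ∈ ω, i ∈ γ

lemma wordProd_mem_closure {γ : Set B} {ω : List B} (h : Over γ ω) :
    π ω ∈ Subgroup.closure (cs.simple '' γ) := by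
  induction ω with
  | nil => rw [cs.wordProd_nil]; exact one_mem _
  | cons i ω ih =>
      rw [cs.wordProd_cons]
      exact mul_mem (Subgroup.subset_closure ⟨i, h i (List.mem_cons_self (a := i) (l := ω)), rfl⟩)
        (ih fun j hj => h j (List.mem_cons_of_mem i hj))

lemma exists_word_over {γ : Set B} {v : W} (hv : v ∈ Subgroup.closure (cs.simple '' γ)) :
    ∃ ω : List B, Over γ ω ∧ π ω = v := by
  induction hv using Subgroup.closure_induction with
  | mem x hx =>
      obtain ⟨i, hi, rfl⟩ := hx
      exact ⟨[i], fun j hj => by simpa using (List.mem_singleton.mp hj) ▸ hi, by simp⟩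
  | one => exact ⟨[], fun j hj => absurd hj (List.not_mem_nil (a := j)), by simp⟩
  | mul x y hx hy ihx ihy =>
      obtain ⟨ω₁, h₁, rfl⟩ := ihx
      obtain ⟨ω₂, h₂, rfl⟩ := ihy
      exact ⟨ω₁ ++ ω₂, fun j hj => by
        rcases List.mem_append.mp hj with h | h
        exacts [h₁ j h, h₂ j h], by rw [cs.wordProd_append]⟩
  | inv x hx ihx =>
      obtain ⟨ω, h₁, rfl⟩ := ihx
      exact ⟨ω.reverse, fun j hj => h₁ j (List.mem_reverse.mp hj), by simp⟩

lemma shorten {γ : Set B} {ω : List B} (hover : Over γ ω) (hnred : ¬ cs.IsReduced ω) :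
    ∃ ω' : List B, Over γ ω' ∧ π ω' = π ω ∧ ω'.length + 2 = ω.length := by
  have hne : ω ≠ [] := by
    rintro rfl
    exact hnred (by simp [CoxeterSystem.IsReduced])
  have hPex : ∃ n, ¬ cs.IsReduced (ω.take (n + 1)) := by
    refine ⟨ω.length - 1, ?_⟩
    have : ω.length - 1 + 1 = ω.length := by
      have := List.length_pos_iff.mpr hne; omega
    rw [this, List.take_length]
    exact hnred
  let k := Nat.find hPex
  have hk : ¬ cs.IsReduced (ω.take (k + 1)) := Nat.find_spec hPex
  have hmin : ∀ m, m < k → cs.IsReduced (ω.take (m + 1)) := by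
    intro m hm
    have := Nat.find_min hPex hm
    exact not_not.mp this
  have hkred : cs.IsReduced (ω.take k) := by
    rcases Nat.eq_zero_or_pos k with h0 | h0
    · rw [h0]; simp [CoxeterSystem.IsReduced]
    · have := hmin (k - 1) (by omega)
      rwa [show k - 1 + 1 = k by omega] at this
  have hklt : k < ω.length := by
    have hle : k ≤ ω.length - 1 := Nat.find_le (by
      have : ω.length - 1 + 1 = ω.length := by
        have := List.length_pos_iff.mpr hne; omega
      rw [this, List.take_length]; exact hnred)
    have := List.length_pos_iff.mpr hne
    omega
  have htake : ω.take (k + 1) = ω.take k ++ [ω.get ⟨k, hklt⟩] := by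
    rw [List.take_succ]
    simp [List.getElem?_eq_getElem hklt]
  have hlen_take : (ω.take k).length = k := by
    rw [List.length_take]; omega
  have hltake : ℓ (π (ω.take k)) = k := by
    have h1 : ℓ (π (ω.take k)) = (ω.take k).length := hkred
    rw [h1, hlen_take]
  set i := ω.get ⟨k, hklt⟩ with hi
  have hdesc : ℓ (π (ω.take k) * s i) < ℓ (π (ω.take k)) := by
    rcases cs.length_mul_simple (π (ω.take k)) i with hup | hdown
    · exfalso
      apply hk
      rw [htake, CoxeterSystem.IsReduced, cs.wordProd_append, cs.wordProd_singleton, hup, hltake]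
      simp [hlen_take]
    · omega
  obtain ⟨j, hjk, hexch⟩ := right_exchange cs hkred (cs.isReflection_simple i) hdesc
  rw [hlen_take] at hjk
  refine ⟨(ω.take k).eraseIdx j ++ ω.drop (k + 1), ?_, ?_, ?_⟩
  · intro x hx
    rcases List.mem_append.mp hx with h | h
    · exact hover x (List.Sublist.mem h ((List.eraseIdx_sublist _ j).trans (List.take_sublist k ω)))
    · exact hover x (List.Sublist.mem h (List.drop_sublist (k + 1) ω))
  · rw [cs.wordProd_append, ← hexch]
    conv_rhs => rw [← List.take_append_drop (k + 1) ω]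
    rw [cs.wordProd_append, htake, cs.wordProd_append, cs.wordProd_singleton]
  · have hek : ((ω.take k).eraseIdx j).length = k - 1 := by
      rw [List.length_eraseIdx, hlen_take]
      simp [hjk]
    rw [List.length_append, hek, List.length_drop]
    omega

lemma exists_reduced_word_over {γ : Set B} {v : W}
    (hv : v ∈ Subgroup.closure (cs.simple '' γ)) :
    ∃ ω : List B, Over γ ω ∧ cs.IsReduced ω ∧ π ω = v := by
  obtain ⟨ω, hover, hprod⟩ := exists_word_over cs hv
  clear hv
  suffices h : ∀ (n : ℕ) (ω : List B), ω.length = n → Over γ ω →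
      ∃ ω' : List B, Over γ ω' ∧ cs.IsReduced ω' ∧ π ω' = π ω by
    obtain ⟨ω', h1, h2, h3⟩ := h ω.length ω rfl hover
    exact ⟨ω', h1, h2, by rw [h3, hprod]⟩
  intro n
  induction n using Nat.strong_induction_on with
  | _ n ih =>
      intro ω hn hover
      by_cases hred : cs.IsReduced ω
      · exact ⟨ω, hover, hred, rfl⟩
      · obtain ⟨ω', hover', hprod', hlen'⟩ := shorten cs hover hred
        obtain ⟨ω'', h1, h2, h3⟩ := ih ω'.length (by omega) ω' rfl hover'
        exact ⟨ω'', h1, h2, by rw [h3, hprod']⟩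

lemma left_peel {γ : Set B} {v : W} (hv : v ∈ Subgroup.closure (cs.simple '' γ))
    (hne : v ≠ 1) :
    ∃ i ∈ γ, ∃ v₁ ∈ Subgroup.closure (cs.simple '' γ),
      v = s i * v₁ ∧ ℓ v₁ + 1 = ℓ v := by
  obtain ⟨ω, hover, hred, hprod⟩ := exists_reduced_word_over cs hv
  match ω, hover, hred, hprod with
  | [], _, _, hprod => exact absurd (by simpa using hprod.symm) hne
  | i :: ω₁, hover, hred, hprod =>
      refine ⟨i, hover i (List.mem_cons_self (a := i) (l := ω₁)), π ω₁,
        wordProd_mem_closure cs (fun j hj => hover j (List.mem_cons_of_mem i hj)), ?_, ?_⟩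
      · rw [← hprod, cs.wordProd_cons]
      · have hred₁ : cs.IsReduced ω₁ := by
          have := hred.drop 1
          simpa using this
        rw [← hprod, hred, hred₁]
        simp

/-- The key length lemma: if every `i ∈ γ` is a left descent of `v`, then
for every `y` in the parabolic subgroup generated by `γ`,
`ℓ v = ℓ y + ℓ (y⁻¹ v)`. -/
lemma key_lemma {γ : Set B} {v : W} (hv : ∀ i ∈ γ, ℓ (s i * v) < ℓ v) :
    ∀ y ∈ Subgroup.closure (cs.simple '' γ), ℓ v = ℓ y + ℓ (y⁻¹ * v) := by
  suffices h : ∀ (n : ℕ) (y : W), y ∈ Subgroup.closure (cs.simple '' γ) → ℓ y = n →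
      ℓ v = ℓ y + ℓ (y⁻¹ * v) by
    intro y hy
    exact h (ℓ y) y hy rfl
  intro n
  induction n using Nat.strong_induction_on with
  | _ n ih =>
      intro y hy hn
      rcases eq_or_ne y 1 with rfl | hne
      · simp
      · obtain ⟨i, hiγ, y₁, hy₁, hsplit, hlen⟩ := left_peel cs hy hne
        have hy₁len : ℓ y₁ < n := by omega
        have IH := ih (ℓ y₁) (by omega) y₁ hy₁ rfl
        -- z := y₁⁻¹ * v
        set z := y₁⁻¹ * v with hz
        obtain ⟨ω₁, hover₁, hred₁, hprod₁⟩ := exists_reduced_word_over cs hy₁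
        obtain ⟨ωz, hredz, hprodz⟩ := cs.exists_reduced_word' z
        have hvprod : π (ω₁ ++ ωz) = v := by
          rw [cs.wordProd_append, hprod₁, ← hprodz, hz]
          simp
        have hredv : cs.IsReduced (ω₁ ++ ωz) := by
          rw [CoxeterSystem.IsReduced, hvprod, List.length_append, IH, ← hprod₁, ← hred₁, hprodz, ← hredz]
        have hdesc : ℓ (s i * π (ω₁ ++ ωz)) < ℓ (π (ω₁ ++ ωz)) := by
          rw [hvprod]; exact hv i hiγ
        obtain ⟨j, hj, hexch⟩ := left_exchange cs hredv hdesc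
        rw [hvprod] at hexch
        rw [List.length_append] at hj
        rcases lt_or_ge j ω₁.length with hcase | hcase
        · -- deletion in the `y₁` part: contradiction
          exfalso
          rw [List.eraseIdx_append_of_lt_length hcase, cs.wordProd_append] at hexch
          have hyeq : y = π (ω₁.eraseIdx j) := by
            have : s i * v = π (ω₁.eraseIdx j) * z := by rw [hexch, hprodz]
            have h2 : s i * (y₁ * z) = π (ω₁.eraseIdx j) * z := by
              rw [← this]
              congr 1
              rw [hz]; simp
            have h3 : s i * y₁ = π (ω₁.eraseIdx j) := by
              have h2' : (s i * y₁) * z = π (ω₁.eraseIdx j) * z := by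
                rw [mul_assoc]; exact h2
              exact mul_right_cancel h2'

            rw [hsplit, h3]
          have hlb : ℓ y ≤ (ω₁.eraseIdx j).length := by
            rw [hyeq]; exact cs.length_wordProd_le _
          rw [List.length_eraseIdx, if_pos hcase] at hlb
          have hl1 : ω₁.length = ℓ y₁ := by rw [← hprod₁, ← hred₁]
          omega
        · -- deletion in the `z` part
          rw [List.eraseIdx_append_of_length_le hcase, cs.wordProd_append, hprod₁] at hexch
          have hzlen : ℓ (y⁻¹ * v) ≤ ℓ z - 1 ∧ 1 ≤ ℓ z := by
            have heq : y⁻¹ * v = π (ωz.eraseIdx (j - ω₁.length)) := by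
              rw [hsplit, mul_inv_rev, cs.inv_simple, mul_assoc]
              have : s i * v = y₁ * π (ωz.eraseIdx (j - ω₁.length)) := hexch
              calc y₁⁻¹ * (s i * v) = y₁⁻¹ * (y₁ * π (ωz.eraseIdx (j - ω₁.length))) := by
                    rw [this]
                _ = π (ωz.eraseIdx (j - ω₁.length)) := by simp [mul_assoc]
            have hjz : j - ω₁.length < ωz.length := by omega
            have hlen' : (ωz.eraseIdx (j - ω₁.length)).length = ωz.length - 1 := by
              rw [List.length_eraseIdx]; simp [hjz]
            have hzl : ℓ z = ωz.length := by rw [hprodz, hredz]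
            constructor
            · rw [heq]
              calc ℓ (π (ωz.eraseIdx (j - ω₁.length))) ≤ (ωz.eraseIdx (j - ω₁.length)).length :=
                    cs.length_wordProd_le _
                _ = ℓ z - 1 := by rw [hlen', hzl]
            · omega
          have hub : ℓ v ≤ ℓ y + ℓ (y⁻¹ * v) := by
            have := cs.length_mul_le y (y⁻¹ * v)
            simpa using this
          have : ℓ y + ℓ (y⁻¹ * v) ≤ ℓ v := by
            have h1 : ℓ y ≤ ℓ y₁ + 1 := by omega
            have h2 : ℓ v = ℓ y₁ + ℓ z := IH
            omega
          omega


/-- The longest element is an involution. -/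
lemma longest_mul_self {γ : Set B} {r : W} (hr : IsLongestOf cs γ r) : r * r = 1 := by
  have hmem : r⁻¹ ∈ Subgroup.closure (cs.simple '' γ) := inv_mem hr.1
  have := hr.2.2 r⁻¹ hmem (cs.length_inv r)
  calc r * r = r * r⁻¹ := by rw [this]
    _ = 1 := mul_inv_cancel r

lemma longest_length_pos {γ : Set B} (hγ : γ.Nonempty) {r : W} (hr : IsLongestOf cs γ r) :
    1 ≤ ℓ r := by
  obtain ⟨i, hi⟩ := hγ
  have : s i ∈ Subgroup.closure (cs.simple '' γ) :=
    Subgroup.subset_closure ⟨i, hi, rfl⟩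
  have := hr.2.1 (s i) this
  rw [cs.length_simple] at this
  exact this

/-- Dividing off the longest element: if every `i ∈ γ` is a right descent of `w`, then
`ℓ w = ℓ r + ℓ (w r)`. -/
lemma length_mul_longest {γ : Set B} {r : W} (hr : IsLongestOf cs γ r) {w : W}
    (hw : ∀ i ∈ γ, ℓ (w * s i) < ℓ w) : ℓ w = ℓ r + ℓ (w * r) := by
  have hv : ∀ i ∈ γ, ℓ (s i * w⁻¹) < ℓ w⁻¹ := by
    intro i hi
    have e : s i * w⁻¹ = (w * s i)⁻¹ := by rw [mul_inv_rev, cs.inv_simple]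
    rw [e, cs.length_inv, cs.length_inv]
    exact hw i hi
  have := key_lemma cs hv r hr.1
  rw [cs.length_inv] at this
  have hrinv : r⁻¹ = r := by
    have h := longest_mul_self cs hr
    calc r⁻¹ = r⁻¹ * (r * r) := by rw [h, mul_one]
      _ = r := by rw [← mul_assoc, inv_mul_cancel, one_mul]
  have e2 : r⁻¹ * w⁻¹ = (w * r)⁻¹ := by rw [mul_inv_rev]
  rw [e2, cs.length_inv] at this
  exact this

end ExchAux

open ExchAux

/-- If the spherical 2-partition `{α, β}` is admissible, then every element of
`⟨r_α, r_β⟩` admits a compatible representation on `{α, β}`. -/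
theorem exists_compatible_representation_of_admissible {B W : Type*} [Group W]
    {M : CoxeterMatrix B} (cs : CoxeterSystem M W)
    (α β : Set B) (hunion : α ∪ β = Set.univ) (hdisj : Disjoint α β)
    (hα : α.Nonempty) (hβ : β.Nonempty)
    (hsphα : IsSpherical cs α) (hsphβ : IsSpherical cs β)
    (rα rβ : W) (hrα : IsLongestOf cs α rα) (hrβ : IsLongestOf cs β rβ)
    (hadm : ∀ w ∈ Subgroup.closure ({rα, rβ} : Set W), ∀ γ ∈ ({α, β} : Set (Set B)),
      (∀ i ∈ γ, cs.length (w * cs.simple i) = cs.length w + 1) ∨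
      (∀ i ∈ γ, cs.length (w * cs.simple i) + 1 = cs.length w)) :
    ∀ w ∈ Subgroup.closure ({rα, rβ} : Set W),
      ∃ L : List W, (∀ x ∈ L, x = rα ∨ x = rβ) ∧ L.prod = w ∧
        cs.length w = (L.map cs.length).sum := by
  suffices h : ∀ (n : ℕ) (w : W), w ∈ Subgroup.closure ({rα, rβ} : Set W) →
      cs.length w = n →
      ∃ L : List W, (∀ x ∈ L, x = rα ∨ x = rβ) ∧ L.prod = w ∧
        cs.length w = (L.map cs.length).sum by
    intro w hw
    exact h (cs.length w) w hw rfl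
  intro n
  induction n using Nat.strong_induction_on with
  | _ n ih =>
      intro w hw hn
      rcases eq_or_ne w 1 with rfl | hne
      · exact ⟨[], by simp, by simp, by simp⟩
      · obtain ⟨i, hi⟩ := cs.exists_rightDescent_of_ne_one hne
        -- find the part containing i
        have hiu : i ∈ α ∪ β := by rw [hunion]; trivial
        have main : ∀ γ ∈ ({α, β} : Set (Set B)), ∀ r : W, IsLongestOf cs γ r → γ.Nonempty →
            i ∈ γ → r ∈ Subgroup.closure ({rα, rβ} : Set W) →
            (r = rα ∨ r = rβ) →
            ∃ L : List W, (∀ x ∈ L, x = rα ∨ x = rβ) ∧ L.prod = w ∧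
              cs.length w = (L.map cs.length).sum := by
          intro γ hγmem r hr hγne hiγ hrcl hror
          have hdesc : ∀ i' ∈ γ, cs.length (w * cs.simple i') < cs.length w := by
            rcases hadm w hw γ hγmem with hup | hdown
            · exfalso
              have := hup i hiγ
              have hd : cs.length (w * cs.simple i) < cs.length w := hi
              omega
            · intro i' hi'
              have := hdown i' hi'
              omega
          have hsplit := length_mul_longest cs hr hdesc
          have hw' : w * r ∈ Subgroup.closure ({rα, rβ} : Set W) :=
            mul_mem hw hrcl
          have hlt : cs.length (w * r) < n := by
            have := longest_length_pos cs hγne hr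
            omega
          obtain ⟨L', hL'mem, hL'prod, hL'len⟩ := ih (cs.length (w * r)) hlt (w * r) hw' rfl
          refine ⟨L' ++ [r], ?_, ?_, ?_⟩
          · intro x hx
            rcases List.mem_append.mp hx with h | h
            · exact hL'mem x h
            · rw [List.mem_singleton.mp h]; exact hror
          · rw [List.prod_append, List.prod_singleton, hL'prod]
            rw [mul_assoc, longest_mul_self cs hr, mul_one]
          · rw [List.map_append, List.sum_append, ← hL'len]
            simp only [List.map_singleton, List.sum_singleton]
            omega
        rcases hiu with hiα | hiβ
        · exact main α (by simp) rα hrα hα hiα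
            (Subgroup.subset_closure (by simp)) (Or.inl rfl)
        · exact main β (by simp) rβ hrβ hβ hiβ
            (Subgroup.subset_closure (by simp)) (Or.inr rfl)
end
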